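/- arXiv:2402.15441 — 6 statements merged into one kernel-verified Lean document; each statement's English description precedes it below -/
import Mathlib

section
/- In the Gaussian kernel setting with finite sample space S, for any k ≥ 0 there exists a multiset B ⊆ S with |B| = k such that for all x' ∈ S, Var(f_{x'} | y_B) ≤ 2σ̃² · γ_{k+1}/(k+1), where σ̃² = max_{x∈𝒳}(k(x,x) + ρ²(x)). Such a B is obtained by greedily selecting points maximizing I(f_S; y_x | y_{B_{i-1}}). -/
open Matrix Real

namespace TransductiveAL

variable {ι : Type*}

/-- Kernel matrix of the kernel `k` over the (multi-)list of points `X`. -/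
noncomputable def kerMat (k : Matrix ι ι ℝ) (X : List ι) :
    Matrix (Fin X.length) (Fin X.length) ℝ :=
  Matrix.of fun i j => k (X.get i) (X.get j)

/-- Diagonal noise covariance matrix `P_X` over the (multi-)list of points `X`. -/
noncomputable def noiseMat (ρ2 : ι → ℝ) (X : List ι) :
    Matrix (Fin X.length) (Fin X.length) ℝ :=
  Matrix.diagonal fun i => ρ2 (X.get i)

/-- Posterior covariance `Cov(f_x, f_{x'} ∣ y_X)` after noisy observations at the points of `X`
(Schur complement formula `k(x,x') − K_{xX}(K_{XX}+P_X)⁻¹K_{Xx'}`). -/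
noncomputable def postCov (k : Matrix ι ι ℝ) (ρ2 : ι → ℝ) (X : List ι) (x x' : ι) : ℝ :=
  k x x' - ∑ i : Fin X.length, ∑ j : Fin X.length,
    k x (X.get i) * (kerMat k X + noiseMat ρ2 X)⁻¹ i j * k (X.get j) x'

/-- Posterior variance `Var(f_x ∣ y_X)`. -/
noncomputable def postVar (k : Matrix ι ι ℝ) (ρ2 : ι → ℝ) (X : List ι) (x : ι) : ℝ :=
  postCov k ρ2 X x x

/-- Posterior covariance matrix `Var(f_A ∣ y_D)` of the target vector `f_A` given
noisy observations at `D`. -/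
noncomputable def targetCov [DecidableEq ι] (k : Matrix ι ι ℝ) (ρ2 : ι → ℝ)
    (A : Finset ι) (D : List ι) : Matrix A A ℝ :=
  Matrix.of fun x x' => postCov k ρ2 D x.1 x'.1

/-- Information gain `I(f_A; y_B ∣ D) = ½(log det Var(f_A ∣ D) − log det Var(f_A ∣ D, y_B))`. -/
noncomputable def iGain [DecidableEq ι] (k : Matrix ι ι ℝ) (ρ2 : ι → ℝ)
    (A : Finset ι) (D B : List ι) : ℝ :=
  (1 / 2) * (Real.log (targetCov k ρ2 A D).det - Real.log (targetCov k ρ2 A (D ++ B)).det)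

/-- Information gain `I(f_x; y_B ∣ D) = ½ log (Var(f_x ∣ D) / Var(f_x ∣ D, y_B))`
for a single target point `x`. -/
noncomputable def pointGain (k : Matrix ι ι ℝ) (ρ2 : ι → ℝ) (x : ι) (D B : List ι) : ℝ :=
  (1 / 2) * (Real.log (postVar k ρ2 D x) - Real.log (postVar k ρ2 (D ++ B) x))

/-- Maximum information gain `γ_n` obtainable from `n` noisy observations within `S`. -/
noncomputable def maxInfoGain [DecidableEq ι] (k : Matrix ι ι ℝ) (ρ2 : ι → ℝ)
    (S : Finset ι) (n : ℕ) : ℝ :=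
  sSup { v | ∃ X : List ι, X.length ≤ n ∧ (∀ x ∈ X, x ∈ S) ∧
    v = (1 / 2) * Real.log (1 + (noiseMat ρ2 X)⁻¹ * kerMat k X).det }

/-- Step-wise ITL objective value `Γ = max_{x ∈ S} I(f_A; y_x ∣ D)`. -/
noncomputable def stepGain [DecidableEq ι] (k : Matrix ι ι ℝ) (ρ2 : ι → ℝ)
    (A S : Finset ι) (D : List ι) : ℝ :=
  sSup { v | ∃ x ∈ S, v = iGain k ρ2 A D [x] }

/-- Kernel matrix `K_SS` restricted to a finset `S`. -/
noncomputable def kerMatOn (k : Matrix ι ι ℝ) (S : Finset ι) : Matrix S S ℝ :=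
  Matrix.of fun i j => k i.1 j.1

/-- Noiseless conditional variance `Var(f_x ∣ f_S) = k(x,x) − K_{xS} K_SS⁻¹ K_{Sx}`
(the irreducible uncertainty `η_S²(x)`). -/
noncomputable def noiselessCondVar [DecidableEq ι] (k : Matrix ι ι ℝ) (S : Finset ι)
    (x : ι) : ℝ :=
  k x x - ∑ i : S, ∑ j : S, k x i.1 * (kerMatOn k S)⁻¹ i j * k j.1 x

/-- List of the first `n` observation points of a sequence. -/
def obsList (xs : ℕ → ι) (n : ℕ) : List ι := (List.range n).map xs

/-- The sequence `xs` follows the ITL decision rule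
`xᵢ ∈ argmax_{x ∈ S} I(f_A; y_x ∣ D_{i-1})`. -/
def IsITL [DecidableEq ι] (k : Matrix ι ι ℝ) (ρ2 : ι → ℝ) (A S : Finset ι)
    (xs : ℕ → ι) : Prop :=
  ∀ i : ℕ, xs i ∈ S ∧ ∀ x ∈ S,
    iGain k ρ2 A (obsList xs i) [x] ≤ iGain k ρ2 A (obsList xs i) [xs i]

/-- Smallest spectral value (the smallest eigenvalue, for symmetric real matrices). -/
noncomputable def minEig {m : Type*} [Fintype m] [DecidableEq m] (M : Matrix m m ℝ) : ℝ :=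
  sInf (spectrum ℝ M)


set_option linter.unusedSectionVars false
set_option linter.unusedVariables false
set_option maxHeartbeats 1000000

section Aux
variable [Fintype ι] [DecidableEq ι]

noncomputable def Mg (k : Matrix ι ι ℝ) (ρ2 : ι → ℝ) {m : ℕ} (g : Fin m → ι) :
    Matrix (Fin m) (Fin m) ℝ :=
  Matrix.of (fun i j => k (g i) (g j)) + Matrix.diagonal (fun i => ρ2 (g i))

noncomputable def vg (k : Matrix ι ι ℝ) {m : ℕ} (g : Fin m → ι) (x : ι) : Fin m → ℝ :=
  fun i => k x (g i)

noncomputable def pv (k : Matrix ι ι ℝ) (ρ2 : ι → ℝ) {m : ℕ} (g : Fin m → ι) (x : ι) : ℝ :=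
  k x x - vg k g x ⬝ᵥ ((Mg k ρ2 g)⁻¹ *ᵥ vg k g x)

noncomputable def qf (k : Matrix ι ι ℝ) (ρ2 : ι → ℝ) {m : ℕ} (g : Fin m → ι) (x : ι)
    (w : Fin m → ℝ) : ℝ :=
  k x x - 2 * (w ⬝ᵥ vg k g x) + w ⬝ᵥ (Mg k ρ2 g *ᵥ w)

variable {k : Matrix ι ι ℝ} {ρ2 : ι → ℝ}

lemma ksymm (hk : k.PosSemidef) (a b : ι) : k a b = k b a := by
  have h := congrFun (congrFun hk.1 b) a
  simpa [Matrix.conjTranspose_apply] using h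

lemma Mg_posDef (hk : k.PosSemidef) (hρ : ∀ x, 0 < ρ2 x) {m : ℕ} (g : Fin m → ι) :
    (Mg k ρ2 g).PosDef :=
  Matrix.PosDef.posSemidef_add (hk.submatrix g) (Matrix.posDef_diagonal_iff.mpr fun i => hρ _)

lemma Mg_symm (hk : k.PosSemidef) (hρ : ∀ x, 0 < ρ2 x) {m : ℕ} (g : Fin m → ι) (i j : Fin m) :
    Mg k ρ2 g i j = Mg k ρ2 g j i := by
  have h := congrFun (congrFun (Mg_posDef hk hρ g).1 j) i
  simpa [Matrix.conjTranspose_apply] using h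

lemma psd_quad_nonneg {m : ℕ} {M : Matrix (Fin m) (Fin m) ℝ} (hM : M.PosSemidef)
    (w : Fin m → ℝ) : 0 ≤ w ⬝ᵥ (M *ᵥ w) := by
  simpa using hM.dotProduct_mulVec_nonneg w

lemma dot_symm (hk : k.PosSemidef) (hρ : ∀ x, 0 < ρ2 x) {m : ℕ} (g : Fin m → ι)
    (a b : Fin m → ℝ) : a ⬝ᵥ (Mg k ρ2 g *ᵥ b) = b ⬝ᵥ (Mg k ρ2 g *ᵥ a) := by
  simp only [dotProduct, mulVec, Finset.mul_sum]
  rw [Finset.sum_comm]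
  refine Finset.sum_congr rfl fun i _ => Finset.sum_congr rfl fun j _ => ?_
  rw [Mg_symm hk hρ g j i]; ring

lemma mulVec_inv_vg (hk : k.PosSemidef) (hρ : ∀ x, 0 < ρ2 x) {m : ℕ} (g : Fin m → ι) (x : ι) :
    Mg k ρ2 g *ᵥ ((Mg k ρ2 g)⁻¹ *ᵥ vg k g x) = vg k g x := by
  rw [Matrix.mulVec_mulVec, Matrix.mul_nonsing_inv _ (Mg_posDef hk hρ g).det_pos.ne'.isUnit,
    Matrix.one_mulVec]

lemma qf_eq (hk : k.PosSemidef) (hρ : ∀ x, 0 < ρ2 x) {m : ℕ} (g : Fin m → ι) (x : ι)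
    (w : Fin m → ℝ) :
    qf k ρ2 g x w = pv k ρ2 g x
      + (w - (Mg k ρ2 g)⁻¹ *ᵥ vg k g x) ⬝ᵥ (Mg k ρ2 g *ᵥ (w - (Mg k ρ2 g)⁻¹ *ᵥ vg k g x)) := by
  set M := Mg k ρ2 g
  set v := vg k g x
  set ws : Fin m → ℝ := M⁻¹ *ᵥ v with hws
  have hMw : M *ᵥ ws = v := mulVec_inv_vg hk hρ g x
  have h1 : (w - ws) ⬝ᵥ (M *ᵥ (w - ws))
      = w ⬝ᵥ (M *ᵥ w) - w ⬝ᵥ (M *ᵥ ws) - ws ⬝ᵥ (M *ᵥ w) + ws ⬝ᵥ (M *ᵥ ws) := by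
    rw [Matrix.mulVec_sub, sub_dotProduct, dotProduct_sub,
      dotProduct_sub]
    ring
  have h2 : ws ⬝ᵥ (M *ᵥ w) = w ⬝ᵥ (M *ᵥ ws) := dot_symm hk hρ g ws w
  have h3 : v ⬝ᵥ (M⁻¹ *ᵥ v) = ws ⬝ᵥ v := by
    rw [hws, dotProduct_comm]
  rw [qf, pv, h1, h2, hMw, h3]
  ring

lemma pv_le_qf (hk : k.PosSemidef) (hρ : ∀ x, 0 < ρ2 x) {m : ℕ} (g : Fin m → ι) (x : ι)
    (w : Fin m → ℝ) : pv k ρ2 g x ≤ qf k ρ2 g x w := by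
  rw [qf_eq hk hρ g x w]
  have := psd_quad_nonneg (Mg_posDef hk hρ g).posSemidef (w - (Mg k ρ2 g)⁻¹ *ᵥ vg k g x)
  linarith

lemma pv_eq_qf (hk : k.PosSemidef) (hρ : ∀ x, 0 < ρ2 x) {m : ℕ} (g : Fin m → ι) (x : ι) :
    pv k ρ2 g x = qf k ρ2 g x ((Mg k ρ2 g)⁻¹ *ᵥ vg k g x) := by
  rw [qf_eq hk hρ g x]
  simp

lemma qf_expand (hk : k.PosSemidef) (hρ : ∀ x, 0 < ρ2 x) {m : ℕ} (g : Fin m → ι) (x : ι)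
    (w : Fin m → ℝ) :
    qf k ρ2 g x w = k x x - 2 * ∑ i, w i * k x (g i)
      + ((∑ i, ∑ j, w i * k (g i) (g j) * w j) + ∑ i, ρ2 (g i) * (w i * w i)) := by
  rw [qf]
  congr 1
  simp only [Mg, dotProduct, mulVec, dotProduct, Matrix.add_apply, Matrix.of_apply,
    Matrix.diagonal_apply, Finset.mul_sum]
  have hterm : ∀ i j : Fin m, w i * ((k (g i) (g j) + if i = j then ρ2 (g i) else 0) * w j)
      = w i * k (g i) (g j) * w j + (if i = j then ρ2 (g i) * (w i * w j) else 0) := by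
    intro i j; split_ifs <;> ring
  simp only [hterm, Finset.sum_add_distrib]
  congr 1
  refine Finset.sum_congr rfl fun i _ => ?_
  simp

lemma qf_nonneg (hk : k.PosSemidef) (hρ : ∀ x, 0 < ρ2 x) {m : ℕ} (g : Fin m → ι) (x : ι)
    (w : Fin m → ℝ) : 0 ≤ qf k ρ2 g x w := by
  set u : ι → ℝ := fun z => (if z = x then 1 else 0) - ∑ i, (if z = g i then w i else 0) with hu
  have H : ∀ c : ι → ℝ, (∑ z, u z * c z) = c x - ∑ i, w i * c (g i) := by
    intro c
    simp only [hu, sub_mul, ite_mul, one_mul, zero_mul, Finset.sum_sub_distrib,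
      Finset.sum_ite_eq', Finset.mem_univ, if_true, Finset.sum_mul]
    congr 1
    rw [Finset.sum_comm]
    refine Finset.sum_congr rfl fun i _ => ?_
    simp [Finset.sum_ite_eq', eq_comm]
  have key : u ⬝ᵥ (k *ᵥ u) = k x x - 2 * ∑ i, w i * k x (g i)
      + ∑ i, ∑ j, w i * k (g i) (g j) * w j := by
    have hc : ∀ z, (k *ᵥ u) z = k z x - ∑ i, w i * k z (g i) := by
      intro z
      have : (k *ᵥ u) z = ∑ z', u z' * k z z' := by
        simp [mulVec, dotProduct, mul_comm]
      rw [this, H (fun z' => k z z')]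
    have : u ⬝ᵥ (k *ᵥ u) = ∑ z, u z * (k *ᵥ u) z := rfl
    rw [this]
    rw [H (fun z => (k *ᵥ u) z)]
    rw [hc x]
    have : ∀ i, w i * (k *ᵥ u) (g i) = w i * k (g i) x - ∑ j, w i * (w j * k (g i) (g j)) := by
      intro i
      rw [hc (g i), mul_sub, Finset.mul_sum]
    rw [Finset.sum_congr rfl fun i _ => this i]
    rw [Finset.sum_sub_distrib]
    have h2 : ∑ i, w i * k (g i) x = ∑ i, w i * k x (g i) := by
      refine Finset.sum_congr rfl fun i _ => by rw [ksymm hk (g i) x]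
    rw [h2]
    have h3 : ∑ i, ∑ j, w i * (w j * k (g i) (g j)) = ∑ i, ∑ j, w i * k (g i) (g j) * w j := by
      refine Finset.sum_congr rfl fun i _ => Finset.sum_congr rfl fun j _ => by ring
    rw [h3]
    ring
  have hpos : 0 ≤ u ⬝ᵥ (k *ᵥ u) := by simpa using hk.dotProduct_mulVec_nonneg u
  have hρpos : 0 ≤ ∑ i, ρ2 (g i) * (w i * w i) :=
    Finset.sum_nonneg fun i _ => mul_nonneg (hρ _).le (mul_self_nonneg _)
  rw [qf_expand hk hρ]
  linarith

lemma pv_nonneg (hk : k.PosSemidef) (hρ : ∀ x, 0 < ρ2 x) {m : ℕ} (g : Fin m → ι) (x : ι) :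
    0 ≤ pv k ρ2 g x := by
  rw [pv_eq_qf hk hρ]; exact qf_nonneg hk hρ g x _

lemma pv_le_diag (hk : k.PosSemidef) (hρ : ∀ x, 0 < ρ2 x) {m : ℕ} (g : Fin m → ι) (x : ι) :
    pv k ρ2 g x ≤ k x x := by
  have h := pv_le_qf hk hρ g x 0
  simpa [qf] using h


lemma qf_append (hk : k.PosSemidef) (hρ : ∀ x, 0 < ρ2 x) {m n : ℕ} (g : Fin m → ι)
    (h : Fin n → ι) (x : ι) (w : Fin m → ℝ) :
    qf k ρ2 (Fin.append g h) x (Fin.append w 0) = qf k ρ2 g x w := by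
  rw [qf_expand hk hρ, qf_expand hk hρ]
  rw [Fin.sum_univ_add (f := fun i => Fin.append w 0 i * k x (Fin.append g h i))]
  rw [Fin.sum_univ_add (f := fun i => ρ2 (Fin.append g h i) *
    (Fin.append w 0 i * Fin.append w 0 i))]
  rw [Fin.sum_univ_add (f := fun i => ∑ j, Fin.append w 0 i *
    k (Fin.append g h i) (Fin.append g h j) * Fin.append w 0 j)]
  simp only [Fin.append_left, Fin.append_right, Pi.zero_apply, zero_mul, mul_zero,
    Finset.sum_const_zero, add_zero]
  congr 2
  refine Finset.sum_congr rfl fun i _ => ?_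
  rw [Fin.sum_univ_add (f := fun j => w i *
    k (g i) (Fin.append g h j) * Fin.append w 0 j)]
  simp [Fin.append_left, Fin.append_right]

lemma pv_append_le (hk : k.PosSemidef) (hρ : ∀ x, 0 < ρ2 x) {m n : ℕ} (g : Fin m → ι)
    (h : Fin n → ι) (x : ι) :
    pv k ρ2 (Fin.append g h) x ≤ pv k ρ2 g x := by
  calc pv k ρ2 (Fin.append g h) x
      ≤ qf k ρ2 (Fin.append g h) x (Fin.append ((Mg k ρ2 g)⁻¹ *ᵥ vg k g x) 0) :=
        pv_le_qf hk hρ _ x _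
    _ = qf k ρ2 g x ((Mg k ρ2 g)⁻¹ *ᵥ vg k g x) := qf_append hk hρ g h x _
    _ = pv k ρ2 g x := (pv_eq_qf hk hρ g x).symm

lemma Mg_reindex {m n : ℕ} (e : Fin n ≃ Fin m) (g : Fin m → ι) :
    Mg k ρ2 (g ∘ e) = (Mg k ρ2 g).submatrix e e := by
  ext i j
  simp [Mg, Matrix.submatrix_apply, Matrix.diagonal_apply, Matrix.add_apply,
    EmbeddingLike.apply_eq_iff_eq]

lemma pv_reindex {m n : ℕ} (e : Fin n ≃ Fin m) (g : Fin m → ι) (x : ι) :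
    pv k ρ2 (g ∘ e) x = pv k ρ2 g x := by
  rw [pv, pv, Mg_reindex e g]
  congr 1
  rw [Matrix.inv_submatrix_equiv]
  have hv : vg k (g ∘ e) x = (vg k g x) ∘ e := rfl
  rw [hv, Matrix.submatrix_mulVec_equiv]
  have hvv : (vg k g x ∘ e) ∘ e.symm = vg k g x := by ext i; simp
  rw [hvv]
  rw [dotProduct]
  exact Equiv.sum_comp e (fun i => vg k g x i * ((Mg k ρ2 g)⁻¹ *ᵥ vg k g x) i)

lemma detMg_reindex {m n : ℕ} (e : Fin n ≃ Fin m) (g : Fin m → ι) :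
    (Mg k ρ2 (g ∘ e)).det = (Mg k ρ2 g).det := by
  rw [Mg_reindex e g, Matrix.det_submatrix_equiv_self]


lemma detMg_snoc (hk : k.PosSemidef) (hρ : ∀ x, 0 < ρ2 x) {m : ℕ} (g : Fin m → ι) (x : ι) :
    (Mg k ρ2 (Fin.snoc g x)).det = (Mg k ρ2 g).det * (pv k ρ2 g x + ρ2 x) := by
  have hsub : (Mg k ρ2 (Fin.snoc g x)).submatrix finSumFinEquiv finSumFinEquiv
      = Matrix.fromBlocks (Mg k ρ2 g)
          (Matrix.of fun i (_ : Fin 1) => k (g i) x)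
          (Matrix.of fun (_ : Fin 1) j => k x (g j))
          (Matrix.of fun (_ : Fin 1) (_ : Fin 1) => k x x + ρ2 x) := by
    ext i j
    have hnat : ∀ j : Fin 1, (Fin.natAdd m j) = Fin.last m := by
      intro j
      have : j = 0 := Subsingleton.elim _ _
      subst this
      ext
      simp
    cases i with
    | inl i =>
      cases j with
      | inl j =>
        simp only [Matrix.submatrix_apply, finSumFinEquiv_apply_left, Mg,
          Matrix.fromBlocks_apply₁₁, Matrix.add_apply, Matrix.of_apply,
          Matrix.diagonal_apply]
        have h1 : (Fin.castAdd 1 i : Fin (m+1)) = Fin.castSucc i := rfl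
        have h2 : (Fin.castAdd 1 j : Fin (m+1)) = Fin.castSucc j := rfl
        rw [h1, h2, Fin.snoc_castSucc, Fin.snoc_castSucc]
        simp [Fin.castSucc_inj]
      | inr j =>
        simp only [Matrix.submatrix_apply, finSumFinEquiv_apply_left,
          finSumFinEquiv_apply_right, Mg, Matrix.fromBlocks_apply₁₂, Matrix.add_apply,
          Matrix.of_apply, Matrix.diagonal_apply, hnat]
        have h1 : (Fin.castAdd 1 i : Fin (m+1)) = Fin.castSucc i := rfl
        rw [h1, Fin.snoc_castSucc, Fin.snoc_last]
        have hne : Fin.castSucc i ≠ Fin.last m := Fin.ne_of_lt (Fin.castSucc_lt_last i)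
        simp [hne]
    | inr i =>
      cases j with
      | inl j =>
        simp only [Matrix.submatrix_apply, finSumFinEquiv_apply_left,
          finSumFinEquiv_apply_right, Mg, Matrix.fromBlocks_apply₂₁, Matrix.add_apply,
          Matrix.of_apply, Matrix.diagonal_apply, hnat]
        have h2 : (Fin.castAdd 1 j : Fin (m+1)) = Fin.castSucc j := rfl
        rw [h2, Fin.snoc_castSucc, Fin.snoc_last]
        have hne : Fin.last m ≠ Fin.castSucc j := (Fin.ne_of_lt (Fin.castSucc_lt_last j)).symm
        simp [hne]
      | inr j =>
        simp only [Matrix.submatrix_apply, finSumFinEquiv_apply_right, Mg,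
          Matrix.fromBlocks_apply₂₂, Matrix.add_apply, Matrix.of_apply,
          Matrix.diagonal_apply, hnat]
        rw [Fin.snoc_last]
        simp
  haveI : Invertible (Mg k ρ2 g) :=
    Matrix.invertibleOfIsUnitDet _ (Mg_posDef hk hρ g).det_pos.ne'.isUnit
  have hdet := Matrix.det_submatrix_equiv_self finSumFinEquiv (Mg k ρ2 (Fin.snoc g x))
  rw [← hdet, hsub, Matrix.det_fromBlocks₁₁]
  congr 1
  rw [Matrix.invOf_eq_nonsing_inv, Matrix.det_fin_one]
  simp only [Matrix.sub_apply, Matrix.of_apply, Matrix.mul_apply]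
  have hq : ∑ j, (∑ i, k x (g i) * (Mg k ρ2 g)⁻¹ i j) * k (g j) x
      = vg k g x ⬝ᵥ ((Mg k ρ2 g)⁻¹ *ᵥ vg k g x) := by
    simp only [dotProduct, mulVec, vg, Finset.sum_mul, Finset.mul_sum]
    rw [Finset.sum_comm]
    refine Finset.sum_congr rfl fun i _ => Finset.sum_congr rfl fun j _ => ?_
    rw [ksymm hk (g j) x]
    ring
  rw [hq, pv]
  ring


lemma MgX (X : List ι) : kerMat k X + noiseMat ρ2 X = Mg k ρ2 X.get := rfl

lemma postVar_eq (hk : k.PosSemidef) (X : List ι) (x : ι) :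
    postVar k ρ2 X x = pv k ρ2 X.get x := by
  rw [postVar, postCov, pv, MgX]
  congr 1
  simp only [dotProduct, mulVec, vg, Finset.mul_sum]
  refine Finset.sum_congr rfl fun i _ => Finset.sum_congr rfl fun j _ => ?_
  rw [ksymm hk (X.get j) x]
  ring

lemma get_append_snoc (X : List ι) (x : ι) :
    (X ++ [x]).get = Fin.snoc X.get x ∘ finCongr (by simp) := by
  funext i
  simp only [Function.comp_apply]
  by_cases hi : (i : ℕ) < X.length
  · have h1 : (finCongr (by simp : (X ++ [x]).length = X.length + 1) i)
        = Fin.castSucc ⟨(i : ℕ), hi⟩ := by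
      ext; simp
    rw [h1, Fin.snoc_castSucc]
    simp only [List.get_eq_getElem]
    exact List.getElem_append_left hi
  · have hlen : (i : ℕ) = X.length := by
      have := i.isLt
      simp only [List.length_append, List.length_singleton] at this
      omega
    have h1 : (finCongr (by simp : (X ++ [x]).length = X.length + 1) i) = Fin.last X.length := by
      ext; simp [hlen]
    rw [h1, Fin.snoc_last]
    simp only [List.get_eq_getElem]
    rw [List.getElem_append_right (le_of_eq hlen.symm)]
    simp [hlen]

lemma get_append_gen (X Y : List ι) :
    (X ++ Y).get = Fin.append X.get Y.get ∘ finCongr (by simp) := by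
  funext i
  simp only [Function.comp_apply]
  by_cases hi : (i : ℕ) < X.length
  · have h1 : (finCongr (by simp : (X ++ Y).length = X.length + Y.length) i)
        = Fin.castAdd Y.length ⟨(i : ℕ), hi⟩ := by ext; simp
    rw [h1, Fin.append_left]
    simp only [List.get_eq_getElem]
    exact List.getElem_append_left hi
  · push_neg at hi
    have hlt : (i : ℕ) - X.length < Y.length := by
      have := i.isLt
      simp only [List.length_append] at this
      omega
    have h1 : (finCongr (by simp : (X ++ Y).length = X.length + Y.length) i)
        = Fin.natAdd X.length ⟨(i : ℕ) - X.length, hlt⟩ := by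
      ext; simp; omega
    rw [h1, Fin.append_right]
    simp only [List.get_eq_getElem]
    rw [List.getElem_append_right hi]

lemma postVar_append_le (hk : k.PosSemidef) (hρ : ∀ x, 0 < ρ2 x) (X Y : List ι) (x : ι) :
    postVar k ρ2 (X ++ Y) x ≤ postVar k ρ2 X x := by
  rw [postVar_eq hk, postVar_eq hk, get_append_gen X Y, pv_reindex]
  exact pv_append_le hk hρ X.get Y.get x

lemma postVar_nonneg (hk : k.PosSemidef) (hρ : ∀ x, 0 < ρ2 x) (X : List ι) (x : ι) :
    0 ≤ postVar k ρ2 X x := by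
  rw [postVar_eq hk]; exact pv_nonneg hk hρ _ x

lemma postVar_le_diag (hk : k.PosSemidef) (hρ : ∀ x, 0 < ρ2 x) (X : List ι) (x : ι) :
    postVar k ρ2 X x ≤ k x x := by
  rw [postVar_eq hk]; exact pv_le_diag hk hρ _ x

lemma detMg_append_list (hk : k.PosSemidef) (hρ : ∀ x, 0 < ρ2 x) (X : List ι) (x : ι) :
    (Mg k ρ2 (X ++ [x]).get).det = (Mg k ρ2 X.get).det * (postVar k ρ2 X x + ρ2 x) := by
  rw [get_append_snoc X x, detMg_reindex, detMg_snoc hk hρ, postVar_eq hk]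

lemma prodF_append (f : ι → ℝ) (X : List ι) (x : ι) :
    (∏ i, f ((X ++ [x]).get i)) = (∏ i, f (X.get i)) * f x := by
  rw [get_append_snoc X x]
  have h2 : (∏ i, f ((Fin.snoc X.get x ∘ finCongr (by simp : (X ++ [x]).length = X.length + 1)) i))
      = ∏ j : Fin (X.length + 1), f ((Fin.snoc X.get x : Fin (X.length + 1) → ι) j) :=
    Equiv.prod_comp (finCongr (by simp : (X ++ [x]).length = X.length + 1))
      (fun j => f ((Fin.snoc X.get x : Fin (X.length + 1) → ι) j))
  rw [h2, Fin.prod_univ_castSucc]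
  simp

lemma kdiag_nonneg (hk : k.PosSemidef) (z : ι) : 0 ≤ k z z := by
  have := hk.dotProduct_mulVec_nonneg (Pi.single z 1)
  simpa using this

lemma detMg_bounds (hk : k.PosSemidef) (hρ : ∀ x, 0 < ρ2 x) (X : List ι) :
    (∏ i, ρ2 (X.get i)) ≤ (Mg k ρ2 X.get).det ∧
      (Mg k ρ2 X.get).det ≤ ∏ i, (k (X.get i) (X.get i) + ρ2 (X.get i)) := by
  induction X using List.reverseRecOn with
  | nil => simp [Matrix.det_isEmpty]
  | append_singleton X x ih =>
    rw [detMg_append_list hk hρ, prodF_append ρ2 X x,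
      prodF_append (fun z => k z z + ρ2 z) X x]
    have hρp : (0:ℝ) < ∏ i, ρ2 (X.get i) := Finset.prod_pos fun i _ => hρ _
    have hpv0 := postVar_nonneg hk hρ X x
    have hpvk := postVar_le_diag hk hρ X x
    constructor
    · exact mul_le_mul ih.1 (by linarith [hρ x]) (hρ x).le (hρp.trans_le ih.1).le
    · refine mul_le_mul ih.2 (by linarith) (by linarith [hρ x]) ?_
      exact Finset.prod_nonneg fun i _ => by
        have := kdiag_nonneg hk (X.get i)
        linarith [hρ (X.get i)]

lemma det_identity (hρ : ∀ x, 0 < ρ2 x) (X : List ι) :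
    (1 + (noiseMat ρ2 X)⁻¹ * kerMat k X).det
      = (Mg k ρ2 X.get).det / ∏ i, ρ2 (X.get i) := by
  have hdetP : (noiseMat ρ2 X).det = ∏ i, ρ2 (X.get i) := by
    rw [noiseMat, Matrix.det_diagonal]
  have hu : IsUnit (noiseMat ρ2 X).det := by
    rw [hdetP]
    exact (Finset.prod_pos fun i _ => hρ _).ne'.isUnit
  have h1 : (1 : Matrix (Fin X.length) (Fin X.length) ℝ) + (noiseMat ρ2 X)⁻¹ * kerMat k X
      = (noiseMat ρ2 X)⁻¹ * (noiseMat ρ2 X + kerMat k X) := by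
    rw [mul_add, Matrix.nonsing_inv_mul _ hu]
  rw [h1, Matrix.det_mul, Matrix.det_nonsing_inv, hdetP]
  have h2 : noiseMat ρ2 X + kerMat k X = Mg k ρ2 X.get := by
    rw [add_comm]; exact MgX X
  rw [h2]
  rw [Ring.inverse_eq_inv']
  field_simp [mul_comm]


lemma t_le_mul_log (t : ℝ) (ht : 0 ≤ t) : t ≤ (1 + t) * Real.log (1 + t) := by
  have h1 : (0:ℝ) < 1 + t := by linarith
  have h2 := Real.log_le_sub_one_of_pos (inv_pos.mpr h1)
  rw [Real.log_inv] at h2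
  have h3 : 1 - (1+t)⁻¹ ≤ Real.log (1+t) := by linarith
  have h4 : (1+t) * (1 - (1+t)⁻¹) = t := by field_simp; ring
  calc t = (1+t) * (1 - (1+t)⁻¹) := h4.symm
    _ ≤ (1+t) * Real.log (1+t) := mul_le_mul_of_nonneg_left h3 h1.le

variable (k ρ2) in
noncomputable def pickMax (S : Finset ι) (hS : S.Nonempty) (D : List ι) : ι :=
  (Finset.exists_max_image S (fun x => postVar k ρ2 D x / ρ2 x) hS).choose

variable (k ρ2) in
lemma pickMax_mem (S : Finset ι) (hS : S.Nonempty) (D : List ι) :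
    pickMax k ρ2 S hS D ∈ S :=
  (Finset.exists_max_image S (fun x => postVar k ρ2 D x / ρ2 x) hS).choose_spec.1

variable (k ρ2) in
lemma pickMax_spec (S : Finset ι) (hS : S.Nonempty) (D : List ι) :
    ∀ x ∈ S, postVar k ρ2 D x / ρ2 x
      ≤ postVar k ρ2 D (pickMax k ρ2 S hS D) / ρ2 (pickMax k ρ2 S hS D) :=
  (Finset.exists_max_image S (fun x => postVar k ρ2 D x / ρ2 x) hS).choose_spec.2

variable (k ρ2) in
noncomputable def greedy (S : Finset ι) (hS : S.Nonempty) : ℕ → List ι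
  | 0 => []
  | i+1 => greedy S hS i ++ [pickMax k ρ2 S hS (greedy S hS i)]

lemma greedy_length (S : Finset ι) (hS : S.Nonempty) (i : ℕ) :
    (greedy k ρ2 S hS i).length = i := by
  induction i with
  | zero => rfl
  | succ i ih => simp [greedy, ih]

lemma greedy_mem (S : Finset ι) (hS : S.Nonempty) (i : ℕ) :
    ∀ z ∈ greedy k ρ2 S hS i, z ∈ S := by
  induction i with
  | zero => simp [greedy]
  | succ i ih =>
    intro z hz
    rw [greedy, List.mem_append] at hz
    rcases hz with hz | hz
    · exact ih z hz
    · simp at hz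
      subst hz
      exact pickMax_mem k ρ2 S hS _

lemma greedy_prefix (S : Finset ι) (hS : S.Nonempty) {i j : ℕ} (h : i ≤ j) :
    ∃ T, greedy k ρ2 S hS j = greedy k ρ2 S hS i ++ T := by
  induction j, h using Nat.le_induction with
  | base => exact ⟨[], by simp⟩
  | succ j hij ih =>
    obtain ⟨T, hT⟩ := ih
    exact ⟨T ++ [pickMax k ρ2 S hS (greedy k ρ2 S hS j)], by
      rw [greedy, hT, List.append_assoc]⟩

lemma greedy_det_lower (hk : k.PosSemidef) (hρ : ∀ x, 0 < ρ2 x)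
    (S : Finset ι) (hS : S.Nonempty) (n : ℕ) (x' : ι) (hx' : x' ∈ S) :
    ∀ i ≤ n,
      (∏ j, ρ2 ((greedy k ρ2 S hS i).get j))
          * (1 + postVar k ρ2 (greedy k ρ2 S hS n) x' / ρ2 x') ^ i
        ≤ (Mg k ρ2 (greedy k ρ2 S hS i).get).det := by
  set t := postVar k ρ2 (greedy k ρ2 S hS n) x' / ρ2 x' with hts
  have ht0 : 0 ≤ t := div_nonneg (postVar_nonneg hk hρ _ _) (hρ x').le
  intro i
  induction i with
  | zero =>
    intro _
    haveI : IsEmpty (Fin ([] : List ι).length) := Fin.isEmpty'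
    haveI : IsEmpty (Fin (greedy k ρ2 S hS 0).length) := Fin.isEmpty'
    rw [pow_zero, mul_one, Matrix.det_isEmpty, Finset.univ_eq_empty, Finset.prod_empty]
  | succ i ih =>
    intro hi
    have hin : i ≤ n := Nat.le_of_succ_le hi
    have ih' := ih hin
    set D := greedy k ρ2 S hS i with hD
    set p := pickMax k ρ2 S hS D with hp
    have hstep : (Mg k ρ2 (greedy k ρ2 S hS (i+1)).get).det
        = (Mg k ρ2 D.get).det * (postVar k ρ2 D p + ρ2 p) := by
      rw [greedy]
      exact detMg_append_list hk hρ D p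
    have hmono : t ≤ postVar k ρ2 D x' / ρ2 x' := by
      obtain ⟨T, hT⟩ := greedy_prefix (k := k) (ρ2 := ρ2) S hS hin
      rw [hts, hT]
      gcongr
      · exact (hρ x').le
      · exact postVar_append_le hk hρ D T x'
    have hpick : postVar k ρ2 D x' / ρ2 x' ≤ postVar k ρ2 D p / ρ2 p :=
      pickMax_spec k ρ2 S hS D x' hx'
    have ht' : t ≤ postVar k ρ2 D p / ρ2 p := le_trans hmono hpick
    have hfac : ρ2 p * (1 + t) ≤ postVar k ρ2 D p + ρ2 p := by
      have h1 : t * ρ2 p ≤ postVar k ρ2 D p := (le_div_iff₀ (hρ p)).mp ht'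
      nlinarith
    have hprod : (∏ j, ρ2 ((greedy k ρ2 S hS (i+1)).get j)) = (∏ j, ρ2 (D.get j)) * ρ2 p := by
      rw [greedy]
      exact prodF_append ρ2 D p
    have hρD : (0:ℝ) < ∏ j, ρ2 (D.get j) := Finset.prod_pos fun j _ => hρ _
    have hdet0 : (0:ℝ) ≤ (Mg k ρ2 D.get).det :=
      (hρD.trans_le (detMg_bounds hk hρ D).1).le
    rw [hstep, hprod, pow_succ]
    calc (∏ j, ρ2 (D.get j)) * ρ2 p * ((1+t)^i * (1+t))
        = ((∏ j, ρ2 (D.get j)) * (1+t)^i) * (ρ2 p * (1+t)) := by ring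
      _ ≤ (Mg k ρ2 D.get).det * (postVar k ρ2 D p + ρ2 p) :=
          mul_le_mul ih' hfac (mul_nonneg (hρ p).le (by linarith)) hdet0



end Aux

/-- For any `n ≥ 0` there exists a multiset `B ⊆ S` with `|B| = n` such that
for all `x' ∈ S`, `Var(f_{x'} ∣ y_B) ≤ 2 σ̃² · γ_{n+1} / (n+1)`,
where `σ̃² = max_z (k(z,z) + ρ²(z))`. -/
theorem exists_uniform_covering_batch [Fintype ι] [DecidableEq ι] [Nonempty ι]
    (k : Matrix ι ι ℝ) (ρ2 : ι → ℝ)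
    (hk : k.PosSemidef) (hρ : ∀ x, 0 < ρ2 x)
    (S : Finset ι) (hS : S.Nonempty) (n : ℕ) :
    ∃ B : List ι, B.length = n ∧ (∀ z ∈ B, z ∈ S) ∧
      ∀ x' ∈ S, postVar k ρ2 B x' ≤
        2 * (⨆ z : ι, (k z z + ρ2 z)) * (maxInfoGain k ρ2 S (n + 1) / (n + 1)) := by
  classical
  have hσz : ∀ z, k z z + ρ2 z ≤ ⨆ z : ι, (k z z + ρ2 z) :=
    fun z => le_ciSup (f := fun z => k z z + ρ2 z) (Set.Finite.bddAbove (Set.finite_range _)) z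
  set σ : ℝ := ⨆ z : ι, (k z z + ρ2 z) with hσ
  refine ⟨greedy k ρ2 S hS n, greedy_length S hS n, greedy_mem S hS n, ?_⟩
  intro x' hx'
  set B := greedy k ρ2 S hS n with hB
  set t := postVar k ρ2 B x' / ρ2 x' with hts
  have ht0 : 0 ≤ t := div_nonneg (postVar_nonneg hk hρ _ _) (hρ x').le
  have hpvt : postVar k ρ2 B x' = ρ2 x' * t := by
    rw [hts, mul_div_assoc', mul_comm, mul_div_assoc, div_self (hρ x').ne', mul_one]
  set X := B ++ [x'] with hX
  have hlenX : X.length ≤ n + 1 := by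
    simp [hX, hB, greedy_length]
  have hmemX : ∀ z ∈ X, z ∈ S := by
    intro z hz
    rw [hX, List.mem_append] at hz
    rcases hz with hz | hz
    · exact greedy_mem S hS n z hz
    · simp at hz; subst hz; exact hx'
  have hρX : (0:ℝ) < ∏ j, ρ2 (X.get j) := Finset.prod_pos fun j _ => hρ _
  have hρB : (0:ℝ) < ∏ j, ρ2 (B.get j) := Finset.prod_pos fun j _ => hρ _
  have hdetX : (∏ j, ρ2 (X.get j)) * (1+t)^(n+1) ≤ (Mg k ρ2 X.get).det := by
    have h1 := greedy_det_lower hk hρ S hS n x' hx' n le_rfl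
    have h2 : (Mg k ρ2 X.get).det
        = (Mg k ρ2 B.get).det * (postVar k ρ2 B x' + ρ2 x') :=
      detMg_append_list hk hρ B x'
    have h3 : (∏ j, ρ2 (X.get j)) = (∏ j, ρ2 (B.get j)) * ρ2 x' := prodF_append ρ2 B x'
    have hdetB0 : (0:ℝ) ≤ (Mg k ρ2 B.get).det := (hρB.trans_le (detMg_bounds hk hρ B).1).le
    have hfac : ρ2 x' * (1+t) = postVar k ρ2 B x' + ρ2 x' := by rw [hpvt]; ring
    rw [h2, h3, pow_succ]
    calc (∏ j, ρ2 (B.get j)) * ρ2 x' * ((1+t)^n * (1+t))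
        = ((∏ j, ρ2 (B.get j)) * (1+t)^n) * (ρ2 x' * (1+t)) := by ring
      _ ≤ (Mg k ρ2 B.get).det * (postVar k ρ2 B x' + ρ2 x') :=
          mul_le_mul h1 (le_of_eq hfac) (mul_nonneg (hρ x').le (by linarith)) hdetB0
  set C : ℝ := max 1 (⨆ z : ι, (k z z + ρ2 z) / ρ2 z) with hCdef
  have hC1 : (1:ℝ) ≤ C := le_max_left _ _
  have hCz : ∀ z, (k z z + ρ2 z) ≤ C * ρ2 z := by
    intro z
    have h1 : (k z z + ρ2 z)/ρ2 z ≤ C :=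
      le_trans (le_ciSup (f := fun z => (k z z + ρ2 z) / ρ2 z) (Set.Finite.bddAbove (Set.finite_range _)) z) (le_max_right _ _)
    have h2 : k z z + ρ2 z = ((k z z + ρ2 z)/ρ2 z) * ρ2 z := by
      rw [div_mul_cancel₀ _ (hρ z).ne']
    rw [h2]
    exact mul_le_mul_of_nonneg_right h1 (hρ z).le
  have hbdd : BddAbove { v | ∃ Y : List ι, Y.length ≤ n + 1 ∧ (∀ x ∈ Y, x ∈ S) ∧
      v = (1 / 2) * Real.log (1 + (noiseMat ρ2 Y)⁻¹ * kerMat k Y).det } := by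
    refine ⟨(1/2) * Real.log (C^(n+1)), ?_⟩
    rintro v ⟨Y, hYlen, hYmem, rfl⟩
    rw [det_identity hρ Y]
    have hρY : (0:ℝ) < ∏ j, ρ2 (Y.get j) := Finset.prod_pos fun j _ => hρ _
    have hb := detMg_bounds hk hρ Y
    have hub : (Mg k ρ2 Y.get).det ≤ C^(n+1) * ∏ j, ρ2 (Y.get j) := by
      calc (Mg k ρ2 Y.get).det
          ≤ ∏ j, (k (Y.get j) (Y.get j) + ρ2 (Y.get j)) := hb.2
        _ ≤ ∏ j, (C * ρ2 (Y.get j)) := by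
            refine Finset.prod_le_prod (fun j _ => ?_) (fun j _ => hCz _)
            have := kdiag_nonneg hk (Y.get j)
            linarith [hρ (Y.get j)]
        _ = C^(Y.length) * ∏ j, ρ2 (Y.get j) := by
            rw [Finset.prod_mul_distrib, Finset.prod_const, Finset.card_univ, Fintype.card_fin]
        _ ≤ C^(n+1) * ∏ j, ρ2 (Y.get j) :=
            mul_le_mul_of_nonneg_right (pow_le_pow_right₀ hC1 hYlen) hρY.le
    have hpos : (0:ℝ) < (Mg k ρ2 Y.get).det / ∏ j, ρ2 (Y.get j) :=
      div_pos (hρY.trans_le hb.1) hρY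
    have hle : (Mg k ρ2 Y.get).det / (∏ j, ρ2 (Y.get j)) ≤ C^(n+1) :=
      (div_le_iff₀ hρY).mpr hub
    exact mul_le_mul_of_nonneg_left (Real.log_le_log hpos hle) (by norm_num)
  have hvγ : (1/2) * Real.log ((1 + (noiseMat ρ2 X)⁻¹ * kerMat k X).det)
      ≤ maxInfoGain k ρ2 S (n+1) := by
    rw [maxInfoGain]
    exact le_csSup hbdd ⟨X, hlenX, hmemX, rfl⟩
  have hlog : ((n:ℝ)+1) * ((1/2) * Real.log (1+t)) ≤ maxInfoGain k ρ2 S (n+1) := by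
    refine le_trans ?_ hvγ
    rw [det_identity hρ X]
    have hquot : (1+t)^(n+1) ≤ (Mg k ρ2 X.get).det / ∏ j, ρ2 (X.get j) :=
      (le_div_iff₀ hρX).mpr (by linarith [hdetX])
    have hposq : (0:ℝ) < (1+t)^(n+1) := pow_pos (by linarith) _
    have hl := Real.log_le_log hposq hquot
    rw [Real.log_pow] at hl
    have : ((n:ℝ)+1) * ((1/2) * Real.log (1+t))
        = (1/2) * (((n+1 : ℕ) : ℝ) * Real.log (1+t)) := by push_cast; ring
    rw [this]
    exact mul_le_mul_of_nonneg_left hl (by norm_num)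
  have hlogt0 : 0 ≤ Real.log (1+t) := Real.log_nonneg (by linarith)
  have hσ0 : 0 ≤ σ := by
    have h1 := hσz x'
    have h2 := kdiag_nonneg hk x'
    linarith [hρ x']
  have hfin1 : postVar k ρ2 B x' ≤ σ * Real.log (1+t) := by
    have h1 := t_le_mul_log t ht0
    have h3 : ρ2 x' * (1+t) = ρ2 x' + postVar k ρ2 B x' := by rw [hpvt]; ring
    have h4 : ρ2 x' + postVar k ρ2 B x' ≤ σ := by
      have h5 := postVar_le_diag hk hρ B x'
      have h6 := hσz x'
      linarith
    calc postVar k ρ2 B x' = ρ2 x' * t := hpvt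
      _ ≤ ρ2 x' * ((1+t) * Real.log (1+t)) := mul_le_mul_of_nonneg_left h1 (hρ x').le
      _ = (ρ2 x' + postVar k ρ2 B x') * Real.log (1+t) := by rw [← h3]; ring
      _ ≤ σ * Real.log (1+t) := mul_le_mul_of_nonneg_right h4 hlogt0
  have hn1 : (0:ℝ) < (n:ℝ) + 1 := by positivity
  have hlog2 : Real.log (1+t) ≤ 2 * (maxInfoGain k ρ2 S (n+1) / ((n:ℝ)+1)) := by
    rw [show ((n:ℝ)+1) * ((1/2) * Real.log (1+t)) = (((n:ℝ)+1)/2) * Real.log (1+t) by ring]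
      at hlog
    have hhalf : (0:ℝ) < ((n:ℝ)+1)/2 := by positivity
    calc Real.log (1+t)
        = ((((n:ℝ)+1)/2) * Real.log (1+t)) / (((n:ℝ)+1)/2) := by field_simp
      _ ≤ maxInfoGain k ρ2 S (n+1) / (((n:ℝ)+1)/2) := by gcongr
      _ = 2 * (maxInfoGain k ρ2 S (n+1) / ((n:ℝ)+1)) := by field_simp
  calc postVar k ρ2 B x' ≤ σ * Real.log (1+t) := hfin1
    _ ≤ σ * (2 * (maxInfoGain k ρ2 S (n+1) / ((n:ℝ)+1))) :=
        mul_le_mul_of_nonneg_left hlog2 hσ0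
    _ = 2 * σ * (maxInfoGain k ρ2 S (n+1) / ((n:ℝ)+1)) := by ring


end TransductiveAL
end

section
/- In the Gaussian kernel setting with finite sample space S such that the covariance matrix K_SS = Var(f_S) is invertible, let ε > 0 and let B ⊆ S be a multiset such that for every x' ∈ S, Var(f_{x'} | y_B) ≤ ε · λ_min²(K_SS) / (|S|² σ⁴), where σ² = max_{x∈𝒳} k(x,x) and λ_min denotes the smallest eigenvalue. Then for every x ∈ 𝒳, Var(f_x | y_B) ≤ Var(f_x | f_S) + ε. -/
open Matrix Real

namespace TransductiveAL

variable {ι : Type*}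

section AuxLemmas

variable {m : Type*} [Fintype m] [DecidableEq m]

private lemma aux_sum_ite_two (f g : m → ℝ) (u v : m) (huv : u ≠ v) :
    (∑ x, if x = u then f x else if x = v then g x else 0) = f u + g v := by
  have : ∀ x, (if x = u then f x else if x = v then g x else 0) =
      (if x = u then f u else 0) + (if x = v then g v else 0) := by
    intro x
    rcases eq_or_ne x u with rfl | hxu
    · simp [huv]
    · rcases eq_or_ne x v with rfl | hxv
      · simp [hxu]
      · simp [hxu, hxv]
  simp [this, Finset.sum_add_distrib]

private lemma aux_psd_diag_nonneg {M : Matrix m m ℝ} (hM : M.PosSemidef) (i : m) :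
    0 ≤ M i i := by
  have := hM.dotProduct_mulVec_nonneg (Pi.single i 1)
  simpa [star_trivial, dotProduct, mulVec, Pi.single_apply, Finset.sum_ite_eq] using this

private lemma aux_psd_sq_le {M : Matrix m m ℝ} (hM : M.PosSemidef) (i j : m) :
    M i j ^ 2 ≤ M i i * M j j := by
  rcases eq_or_ne i j with rfl | hij
  · rw [sq]
  have hsym : M j i = M i j := by
    have := congrFun (congrFun hM.1 i) j
    simpa using this
  have key : ∀ c : ℝ, 0 ≤ M i i * (c * c) + (2 * M i j) * c + M j j := by
    intro c
    set x : m → ℝ := fun z => if z = i then c else if z = j then 1 else 0 with hxdef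
    have h := hM.dotProduct_mulVec_nonneg x
    have hMx : ∀ z, (M *ᵥ x) z = M z i * c + M z j := by
      intro z
      show (∑ w, M z w * x w) = _
      have : ∀ w, M z w * x w = (if w = i then (fun w => M z w * c) w
          else if w = j then (fun w => M z w) w else 0) := by
        intro w; rcases eq_or_ne w i with rfl | hwi
        · simp [hxdef, Ne.symm hij]
        · rcases eq_or_ne w j with rfl | hwj
          · simp [hxdef, hwi]
          · simp [hxdef, hwi, hwj]
      rw [Finset.sum_congr rfl fun w _ => this w, aux_sum_ite_two _ _ _ _ hij]
    have hdot : x ⬝ᵥ (M *ᵥ x) = c * (M i i * c + M i j) + (M j i * c + M j j) := by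
      show (∑ z, x z * (M *ᵥ x) z) = _
      have : ∀ z, x z * (M *ᵥ x) z = (if z = i then (fun z => c * ((M *ᵥ x) z)) z
          else if z = j then (fun z => (M *ᵥ x) z) z else 0) := by
        intro z; rcases eq_or_ne z i with rfl | hzi
        · simp [hxdef]
        · rcases eq_or_ne z j with rfl | hzj
          · simp [hxdef, hzi]
          · simp [hxdef, hzi, hzj]
      rw [Finset.sum_congr rfl fun z _ => this z, aux_sum_ite_two _ _ _ _ hij, hMx, hMx]
    rw [star_trivial, hdot] at h
    calc (0:ℝ) ≤ c * (M i i * c + M i j) + (M j i * c + M j j) := h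
      _ = M i i * (c * c) + (2 * M i j) * c + M j j := by rw [hsym]; ring
  have := discrim_le_zero key
  rw [discrim] at this
  nlinarith [this]

private lemma aux_quadform_lower {M : Matrix m m ℝ} (hM : M.IsHermitian) {c : ℝ}
    (hc : ∀ i, c ≤ hM.eigenvalues i) (a : m → ℝ) :
    c * (a ⬝ᵥ a) ≤ a ⬝ᵥ (M *ᵥ a) := by
  classical
  set U : Matrix m m ℝ := (hM.eigenvectorUnitary : Matrix m m ℝ) with hUdef
  have hU1 : U * star U = 1 := (mem_unitaryGroup_iff).mp hM.eigenvectorUnitary.2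
  set w : m → ℝ := star U *ᵥ a with hwdef
  have hstar : star U = Uᵀ := conjTranspose_eq_transpose_of_trivial U
  have hDentries : (RCLike.ofReal ∘ hM.eigenvalues : m → ℝ) = hM.eigenvalues := by
    funext i; simp
  have hspec : M = U * diagonal hM.eigenvalues * star U := by
    have := hM.spectral_theorem
    rwa [hDentries] at this
  have haw : a ᵥ* U = w := by
    rw [hwdef, hstar, mulVec_transpose]
  have h1 : a ⬝ᵥ (M *ᵥ a) = ∑ i, hM.eigenvalues i * (w i * w i) := by
    have e : a ⬝ᵥ (M *ᵥ a) = a ⬝ᵥ ((U * diagonal hM.eigenvalues * star U) *ᵥ a) :=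
      congrArg (fun N => a ⬝ᵥ (N *ᵥ a)) hspec
    rw [e, ← mulVec_mulVec, ← mulVec_mulVec, dotProduct_mulVec, haw, ← hwdef]
    simp [dotProduct, mulVec_diagonal, mul_comm, mul_left_comm]
  have h2 : a ⬝ᵥ a = ∑ i, w i * w i := by
    have ha : a = U *ᵥ w := by
      rw [hwdef, mulVec_mulVec, hU1, one_mulVec]
    calc a ⬝ᵥ a = (U *ᵥ w) ⬝ᵥ (U *ᵥ w) := by rw [← ha]
      _ = ((U *ᵥ w) ᵥ* U) ⬝ᵥ w := by rw [dotProduct_mulVec]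
      _ = (Uᵀ *ᵥ (U *ᵥ w)) ⬝ᵥ w := by rw [mulVec_transpose]
      _ = ((Uᵀ * U) *ᵥ w) ⬝ᵥ w := by rw [mulVec_mulVec]
      _ = w ⬝ᵥ w := by
            rw [← hstar, (mem_unitaryGroup_iff').mp hM.eigenvectorUnitary.2, one_mulVec]
      _ = ∑ i, w i * w i := rfl
  rw [h1, h2, Finset.mul_sum]
  exact Finset.sum_le_sum fun i _ => mul_le_mul_of_nonneg_right (hc i) (mul_self_nonneg _)

private lemma aux_dsum_eq (M : Matrix m m ℝ) (a b : m → ℝ) :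
    ∑ i, ∑ j, a i * M i j * b j = a ⬝ᵥ M *ᵥ b := by
  simp [dotProduct, mulVec, Finset.mul_sum, mul_assoc]

end AuxLemmas

section AuxPSD

variable {ι : Type*} [Fintype ι] [DecidableEq ι]

private lemma aux_W_posDef (k : Matrix ι ι ℝ) (ρ2 : ι → ℝ) (hk : k.PosSemidef)
    (hρ : ∀ x, 0 < ρ2 x) (B : List ι) : (kerMat k B + noiseMat ρ2 B).PosDef := by
  have h1 : (kerMat k B).PosSemidef := hk.submatrix B.get
  have h2 : (noiseMat ρ2 B).PosDef := posDef_diagonal_iff.mpr fun i => hρ _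
  exact Matrix.PosDef.posSemidef_add h1 h2

private lemma aux_sigma_posSemidef (k : Matrix ι ι ℝ) (ρ2 : ι → ℝ) (hk : k.PosSemidef)
    (hρ : ∀ x, 0 < ρ2 x) (B : List ι) :
    (k - (Matrix.of fun z (i : Fin B.length) => k z (B.get i)) *
      (kerMat k B + noiseMat ρ2 B)⁻¹ *
      (Matrix.of fun z (i : Fin B.length) => k z (B.get i))ᴴ).PosSemidef := by
  set C : Matrix ι (Fin B.length) ℝ := Matrix.of fun z i => k z (B.get i) with hC
  have hW : (kerMat k B + noiseMat ρ2 B).PosDef := aux_W_posDef k ρ2 hk hρ B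
  haveI : Invertible (kerMat k B + noiseMat ρ2 B) := hW.isUnit.invertible
  rw [← Matrix.PosDef.fromBlocks₂₂ k C hW]
  have hsymm : ∀ a b, k a b = k b a := fun a b => by
    have := congrFun (congrFun hk.1 b) a; simpa using this
  have hblocks : fromBlocks k C Cᴴ (kerMat k B + noiseMat ρ2 B) =
      k.submatrix (Sum.elim id B.get) (Sum.elim id B.get) +
        fromBlocks 0 0 0 (noiseMat ρ2 B) := by
    ext p q
    rcases p with p | i <;> rcases q with q | j <;>
      simp [fromBlocks, hC, kerMat, noiseMat, hsymm]
  rw [hblocks]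
  refine (hk.submatrix _).add ?_
  have hD : (noiseMat ρ2 B).PosSemidef :=
    Matrix.PosSemidef.diagonal fun i => (hρ _).le
  refine Matrix.PosSemidef.of_dotProduct_mulVec_nonneg ?_ ?_
  · show _ᴴ = _
    rw [fromBlocks_conjTranspose, hD.1]
    simp
  · intro x
    have hmv : (fromBlocks (0 : Matrix ι ι ℝ) 0 0 (noiseMat ρ2 B)) *ᵥ x =
        Sum.elim (fun _ => (0:ℝ)) ((noiseMat ρ2 B) *ᵥ (x ∘ Sum.inr)) := by
      funext z
      rcases z with z | i <;> simp [mulVec, dotProduct, Fintype.sum_sum_type, fromBlocks]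
    rw [hmv]
    have := hD.dotProduct_mulVec_nonneg (x ∘ Sum.inr)
    simpa [star_trivial, dotProduct, Fintype.sum_sum_type] using this

end AuxPSD

set_option maxHeartbeats 1000000 in
/-- If `K_SS` is invertible, `ε > 0`, and `B ⊆ S` is a multiset with
`Var(f_{x'} ∣ y_B) ≤ ε λ_min²(K_SS) / (|S|² σ⁴)` for all `x' ∈ S` (σ² = max_z k(z,z)),
then `Var(f_x ∣ y_B) ≤ Var(f_x ∣ f_S) + ε` for every `x ∈ 𝒳`. -/
theorem postVar_le_noiselessCondVar_add_of_small_on_S [Fintype ι] [DecidableEq ι] [Nonempty ι]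
    (k : Matrix ι ι ℝ) (ρ2 : ι → ℝ)
    (hk : k.PosSemidef) (hρ : ∀ x, 0 < ρ2 x)
    (S : Finset ι) (hS : IsUnit (kerMatOn k S).det)
    (ε : ℝ) (hε : 0 < ε)
    (B : List ι) (hB : ∀ z ∈ B, z ∈ S)
    (hBvar : ∀ x' ∈ S, postVar k ρ2 B x' ≤
      ε * (minEig (kerMatOn k S)) ^ 2 / ((S.card : ℝ) ^ 2 * (⨆ z : ι, k z z) ^ 2)) :
    ∀ x : ι, postVar k ρ2 B x ≤ noiselessCondVar k S x + ε := by
  intro x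
  classical
  have hsymm : ∀ a b, k a b = k b a := fun a b => by
    have := congrFun (congrFun hk.1 b) a; simpa using this
  rcases S.eq_empty_or_nonempty with rfl | hSne
  · -- empty S : B is empty, both sides are k x x
    have hBnil : B = [] := List.eq_nil_iff_forall_not_mem.mpr fun z hz => by
      simpa using hB z hz
    subst hBnil
    have h1 : postVar k ρ2 [] x = k x x := by
      simp [postVar, postCov]
    have h2 : noiselessCondVar k (∅ : Finset ι) x = k x x := by
      simp [noiselessCondVar]
    rw [h1, h2]
    linarith
  -- main case
  set W := kerMat k B + noiseMat ρ2 B with hWdef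
  set C : Matrix ι (Fin B.length) ℝ := Matrix.of fun z i => k z (B.get i) with hCdef
  set Sm := k - C * W⁻¹ * Cᴴ with hSmdef
  have hSm : Sm.PosSemidef := aux_sigma_posSemidef k ρ2 hk hρ B
  have hQ : ∀ u v, (C * W⁻¹ * Cᴴ) u v =
      (fun i => k u (B.get i)) ⬝ᵥ W⁻¹ *ᵥ (fun j => k (B.get j) v) := by
    intro u v
    rw [Matrix.mul_assoc, Matrix.mul_apply]
    simp only [Matrix.mul_apply, hCdef, Matrix.of_apply, conjTranspose_apply, star_trivial]
    simp [dotProduct, mulVec, Finset.mul_sum, mul_assoc, hsymm v]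
  have hpost : ∀ u v, postCov k ρ2 B u v = Sm u v := by
    intro u v
    show k u v - (∑ i, ∑ j, k u (B.get i) * W⁻¹ i j * k (B.get j) v) = Sm u v
    rw [aux_dsum_eq, hSmdef, Matrix.sub_apply, hQ u v]
  -- the restricted kernel matrix
  set KS := kerMatOn k S with hKSdef
  have hKSpsd : KS.PosSemidef := hk.submatrix (Subtype.val : {z // z ∈ S} → ι)
  have hG : KS * KS⁻¹ = 1 := mul_nonsing_inv _ hS
  set vS : {z // z ∈ S} → ℝ := fun s => k s.1 x with hvSdef
  set w : {z // z ∈ S} → ℝ := KS⁻¹ *ᵥ vS with hwdef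
  have hKSw : KS *ᵥ w = vS := by
    rw [hwdef, mulVec_mulVec, hG, one_mulVec]
  have hBS : ∀ i : Fin B.length, B.get i ∈ S := fun i => hB _ (B.get_mem i)
  set u : Fin B.length → ℝ := fun i => k (B.get i) x with hudef
  set C' : Matrix {z // z ∈ S} (Fin B.length) ℝ := C.submatrix Subtype.val id with hC'def
  have hC'u : C'ᴴ *ᵥ w = u := by
    funext i
    have e1 : (C'ᴴ *ᵥ w) i = ∑ s : {z // z ∈ S}, KS ⟨B.get i, hBS i⟩ s * w s := by
      show (∑ s : {z // z ∈ S}, C'ᴴ i s * w s) = _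
      refine Finset.sum_congr rfl fun s _ => ?_
      have : C'ᴴ i s = k (B.get i) s.1 := by
        simp [hC'def, hCdef, conjTranspose_apply, hsymm]
      rw [this]
      rfl
    rw [e1]
    have : (∑ s : {z // z ∈ S}, KS ⟨B.get i, hBS i⟩ s * w s) =
        (KS *ᵥ w) ⟨B.get i, hBS i⟩ := rfl
    rw [this, hKSw]
  set Sm' := Sm.submatrix (Subtype.val : {z // z ∈ S} → ι) (Subtype.val : {z // z ∈ S} → ι)
    with hSm'def
  have hSm'eq : Sm' = KS - C' * W⁻¹ * C'ᴴ := by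
    rw [hSm'def, hSmdef]
    have e1 : (k - C * W⁻¹ * Cᴴ).submatrix (Subtype.val : {z // z ∈ S} → ι)
          (Subtype.val : {z // z ∈ S} → ι) =
        k.submatrix (Subtype.val : {z // z ∈ S} → ι) (Subtype.val : {z // z ∈ S} → ι) -
          (C * W⁻¹ * Cᴴ).submatrix (Subtype.val : {z // z ∈ S} → ι)
            (Subtype.val : {z // z ∈ S} → ι) := by
      ext s t; simp [Matrix.sub_apply]
    rw [e1]
    have e2 : (C * W⁻¹ * Cᴴ).submatrix (Subtype.val : {z // z ∈ S} → ι)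
          (Subtype.val : {z // z ∈ S} → ι) =
        C' * W⁻¹ * C'ᴴ := by
      rw [Matrix.submatrix_mul _ _ _ (id : Fin B.length → Fin B.length) _
            Function.bijective_id,
          Matrix.submatrix_mul _ _ _ (id : Fin B.length → Fin B.length) _
            Function.bijective_id]
      rw [Matrix.conjTranspose_submatrix]
      rfl
    rw [e2]
    rfl
  have hT2 : w ⬝ᵥ ((C' * W⁻¹ * C'ᴴ) *ᵥ w) = u ⬝ᵥ W⁻¹ *ᵥ u := by
    rw [Matrix.mul_assoc, ← mulVec_mulVec, dotProduct_mulVec, ← mulVec_mulVec]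
    have h1 : w ᵥ* C' = u := by
      rw [← mulVec_transpose, ← conjTranspose_eq_transpose_of_trivial, hC'u]
    rw [h1, hC'u]
  have hidentity : Sm x x = noiselessCondVar k S x + w ⬝ᵥ (Sm' *ᵥ w) := by
    have e1 : Sm x x = k x x - u ⬝ᵥ W⁻¹ *ᵥ u := by
      rw [hSmdef, Matrix.sub_apply, hQ x x]
      have : (fun i => k x (B.get i)) = u := by
        funext i; rw [hudef]; exact hsymm x (B.get i)
      rw [this]
    have e2 : noiselessCondVar k S x = k x x - vS ⬝ᵥ w := by
      show k x x - (∑ s : {z // z ∈ S}, ∑ t : {z // z ∈ S},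
        k x s.1 * KS⁻¹ s t * k t.1 x) = k x x - vS ⬝ᵥ w
      rw [aux_dsum_eq]
      have : (fun s : {z // z ∈ S} => k x s.1) = vS := by
        funext s; rw [hvSdef]; exact hsymm x s.1
      rw [this, ← hwdef]
    have e3 : w ⬝ᵥ (Sm' *ᵥ w) = w ⬝ᵥ vS - u ⬝ᵥ W⁻¹ *ᵥ u := by
      rw [hSm'eq, Matrix.sub_mulVec, dotProduct_sub, hKSw, hT2]
    rw [e1, e2, e3, dotProduct_comm vS w]
    ring
  -- spectral quantities
  haveI : Nonempty {z // z ∈ S} := hSne.to_subtype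
  have hspec : spectrum ℝ KS = Set.range hKSpsd.1.eigenvalues :=
    Matrix.IsHermitian.spectrum_real_eq_range_eigenvalues hKSpsd.1
  have hminEig : minEig KS = sInf (Set.range hKSpsd.1.eigenvalues) := by
    rw [minEig, hspec]
  have hlamle : ∀ i, minEig KS ≤ hKSpsd.1.eigenvalues i := by
    intro i
    rw [hminEig]
    exact csInf_le (Set.finite_range _).bddBelow ⟨i, rfl⟩
  have hlampos : 0 < minEig KS := by
    have hmem : minEig KS ∈ Set.range hKSpsd.1.eigenvalues := by
      rw [hminEig]
      exact (Set.range_nonempty _).csInf_mem (Set.finite_range _)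
    obtain ⟨i0, hi0⟩ := hmem
    rw [← hi0]
    rcases (hKSpsd.eigenvalues_nonneg i0).lt_or_eq with h | h
    · exact h
    · exfalso
      have hdet : KS.det = ∏ i, (hKSpsd.1.eigenvalues i : ℝ) := by
        simpa using hKSpsd.1.det_eq_prod_eigenvalues
      have : KS.det = 0 := by
        rw [hdet]
        exact Finset.prod_eq_zero (Finset.mem_univ i0) (by simpa using h.symm)
      exact hS.ne_zero this
  set lam := minEig KS with hlamdef
  set σ2 := ⨆ z : ι, k z z with hσ2def
  have hkd : ∀ z, 0 ≤ k z z := fun z => aux_psd_diag_nonneg hk z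
  have hσ2le : ∀ z, k z z ≤ σ2 := fun z =>
    le_ciSup (f := fun z : ι => k z z) (Set.finite_range _).bddAbove z
  have hσ2pos : 0 < σ2 := by
    obtain ⟨s0, hs0⟩ := hSne
    have h := aux_quadform_lower hKSpsd.1 hlamle (Pi.single (⟨s0, hs0⟩ : {z // z ∈ S}) 1)
    have hd1 : (Pi.single (⟨s0, hs0⟩ : {z // z ∈ S}) (1:ℝ)) ⬝ᵥ
        (Pi.single (⟨s0, hs0⟩ : {z // z ∈ S}) (1:ℝ)) = 1 := by
      simp [dotProduct, Pi.single_apply, Finset.sum_ite_eq]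
    have hd2 : (Pi.single (⟨s0, hs0⟩ : {z // z ∈ S}) (1:ℝ)) ⬝ᵥ
        (KS *ᵥ Pi.single (⟨s0, hs0⟩ : {z // z ∈ S}) (1:ℝ)) = k s0 s0 := by
      simp [dotProduct, mulVec, Pi.single_apply, Finset.sum_ite_eq, hKSdef, kerMatOn]
    rw [hd1, hd2, mul_one] at h
    exact lt_of_lt_of_le (lt_of_lt_of_le hlampos h) (hσ2le s0)
  set mS := (S.card : ℝ) with hmSdef
  have hmpos : 0 < mS := by
    rw [hmSdef]
    exact_mod_cast Finset.card_pos.mpr hSne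
  set δ := ε * lam ^ 2 / (mS ^ 2 * σ2 ^ 2) with hδdef
  have hδpos : 0 < δ := by positivity
  have hdiag : ∀ s : {z // z ∈ S}, Sm s.1 s.1 ≤ δ := by
    intro s
    have h := hBvar s.1 s.2
    rw [postVar, hpost] at h
    exact h
  have hdiag0 : ∀ s : {z // z ∈ S}, 0 ≤ Sm s.1 s.1 := fun s => aux_psd_diag_nonneg hSm _
  have hoff : ∀ s t : {z // z ∈ S}, |Sm s.1 t.1| ≤ δ := by
    intro s t
    have h2 := aux_psd_sq_le hSm s.1 t.1
    have h3 := hdiag s; have h4 := hdiag t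
    have h5 := hdiag0 s; have h6 := hdiag0 t
    rw [abs_le]
    constructor <;> nlinarith
  -- bound the correction term
  have hTsum : w ⬝ᵥ (Sm' *ᵥ w) = ∑ s, ∑ t, w s * Sm' s t * w t :=
    (aux_dsum_eq Sm' w w).symm
  have hstep1 : w ⬝ᵥ (Sm' *ᵥ w) ≤ δ * ((∑ s, |w s|) * (∑ t, |w t|)) := by
    rw [hTsum]
    calc ∑ s, ∑ t, w s * Sm' s t * w t ≤ ∑ s, ∑ t, |w s| * δ * |w t| := by
          refine Finset.sum_le_sum fun s _ => Finset.sum_le_sum fun t _ => ?_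
          have h1 : w s * Sm' s t * w t ≤ |w s| * |Sm' s t| * |w t| := by
            calc w s * Sm' s t * w t ≤ |w s * Sm' s t * w t| := le_abs_self _
              _ = |w s| * |Sm' s t| * |w t| := by rw [abs_mul, abs_mul]
          refine h1.trans ?_
          have h2 : |Sm' s t| ≤ δ := hoff s t
          exact mul_le_mul_of_nonneg_right
            (mul_le_mul_of_nonneg_left h2 (abs_nonneg _)) (abs_nonneg _)
      _ = δ * ((∑ s, |w s|) * (∑ t, |w t|)) := by
          rw [Finset.sum_mul_sum, Finset.mul_sum]
          refine Finset.sum_congr rfl fun s _ => ?_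
          rw [Finset.mul_sum]
          exact Finset.sum_congr rfl fun t _ => by ring
  have hCS2 : (∑ s, |w s|) * (∑ t, |w t|) ≤ mS * (w ⬝ᵥ w) := by
    have h := sq_sum_le_card_mul_sum_sq (s := (Finset.univ : Finset {z // z ∈ S}))
      (f := fun s => |w s|)
    have e1 : ((Finset.univ : Finset {z // z ∈ S}).card : ℝ) = mS := by
      rw [Finset.card_univ, Fintype.card_coe]
    have e2 : ∑ s : {z // z ∈ S}, |w s| ^ 2 = w ⬝ᵥ w := by
      refine Finset.sum_congr rfl fun s _ => ?_
      rw [sq_abs, sq]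
    calc (∑ s, |w s|) * (∑ t, |w t|) = (∑ s, |w s|) ^ 2 := by rw [sq]
      _ ≤ ((Finset.univ : Finset {z // z ∈ S}).card : ℝ) * ∑ s, |w s| ^ 2 := h
      _ = mS * (w ⬝ᵥ w) := by rw [e1, e2]
  have hlow : lam * (w ⬝ᵥ w) ≤ w ⬝ᵥ vS := by
    have h := aux_quadform_lower hKSpsd.1 hlamle w
    rwa [hKSw] at h
  have hCS : (w ⬝ᵥ vS) ^ 2 ≤ (w ⬝ᵥ w) * (vS ⬝ᵥ vS) := by
    have h := Finset.sum_mul_sq_le_sq_mul_sq Finset.univ w vS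
    have e1 : ∑ i, w i ^ 2 = w ⬝ᵥ w := Finset.sum_congr rfl fun s _ => by rw [sq]
    have e2 : ∑ i, vS i ^ 2 = vS ⬝ᵥ vS := Finset.sum_congr rfl fun s _ => by rw [sq]
    calc (w ⬝ᵥ vS) ^ 2 = (∑ i, w i * vS i) ^ 2 := rfl
      _ ≤ (∑ i, w i ^ 2) * (∑ i, vS i ^ 2) := h
      _ = (w ⬝ᵥ w) * (vS ⬝ᵥ vS) := by rw [e1, e2]
  have hvs : vS ⬝ᵥ vS ≤ mS * σ2 ^ 2 := by
    calc vS ⬝ᵥ vS = ∑ t : {z // z ∈ S}, vS t * vS t := rfl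
      _ ≤ ∑ _t : {z // z ∈ S}, σ2 ^ 2 := by
          refine Finset.sum_le_sum fun t _ => ?_
          have h1 := aux_psd_sq_le hk t.1 x
          have h2 := hσ2le t.1
          have h3 := hσ2le x
          have h4 := hkd t.1
          have h5 := hkd x
          have : vS t * vS t = k t.1 x ^ 2 := by rw [hvSdef, sq]
          rw [this]
          nlinarith
      _ = mS * σ2 ^ 2 := by
          rw [Finset.sum_const, Finset.card_univ, Fintype.card_coe, nsmul_eq_mul]
  have hP : 0 ≤ w ⬝ᵥ w := Finset.sum_nonneg fun i _ => mul_self_nonneg _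
  have hkey : lam ^ 2 * (w ⬝ᵥ w) ≤ mS * σ2 ^ 2 := by
    rcases hP.eq_or_lt with h0 | hpos
    · rw [← h0]
      rw [mul_zero]
      positivity
    · have h1 : (lam * (w ⬝ᵥ w)) ^ 2 ≤ (w ⬝ᵥ vS) ^ 2 := by
        have hnn : 0 ≤ lam * (w ⬝ᵥ w) := by positivity
        exact pow_le_pow_left₀ hnn hlow 2
      nlinarith [hCS, hvs, hpos, h1]
  have hfinal : δ * (mS * (w ⬝ᵥ w)) ≤ ε := by
    rw [hδdef, div_mul_eq_mul_div, div_le_iff₀ (by positivity)]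
    calc ε * lam ^ 2 * (mS * (w ⬝ᵥ w)) = (ε * mS) * (lam ^ 2 * (w ⬝ᵥ w)) := by ring
      _ ≤ (ε * mS) * (mS * σ2 ^ 2) := by
          exact mul_le_mul_of_nonneg_left hkey (by positivity)
      _ = ε * (mS ^ 2 * σ2 ^ 2) := by ring
  have hT : w ⬝ᵥ (Sm' *ᵥ w) ≤ ε :=
    hstep1.trans ((mul_le_mul_of_nonneg_left hCS2 hδpos.le).trans hfinal)
  have hfin : postVar k ρ2 B x = Sm x x := hpost x x
  rw [hfin, hidentity]
  linarith


end TransductiveAL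
end

section
/- In the Gaussian kernel setting, for any ε > 0, any multiset D_n of noisy observations, any point x ∈ 𝒳, and any multiset B ⊆ S satisfying Var(f_x | D_n, y_B) ≤ η_S²(x) + ε (an ε-approximate Markov boundary of x in S), the posterior variance satisfies σ_n²(x) ≤ 2σ² · I(f_x; y_B | D_n) + η_S²(x) + ε, where σ² = max_{x∈𝒳} k(x,x). -/
open Matrix Real

namespace TransductiveAL

variable {ι : Type*}

section AuxMarkovBoundary

variable [Fintype ι]

private lemma aux_quad_lb {n : Type*} [Fintype n] [DecidableEq n] {M : Matrix n n ℝ}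
    (hM : M.PosDef) (c u : n → ℝ) :
    2 * (u ⬝ᵥ c) - u ⬝ᵥ (M *ᵥ u) ≤ c ⬝ᵥ (M⁻¹ *ᵥ c) := by
  have hu : IsUnit M.det := hM.det_pos.ne'.isUnit
  have hsymm : Mᵀ = M := by
    rw [← Matrix.conjTranspose_eq_transpose_of_trivial]; exact hM.isHermitian
  have h0 := hM.inv.posSemidef.dotProduct_mulVec_nonneg (c - M *ᵥ u)
  have hstar : star (c - M *ᵥ u) = c - M *ᵥ u := by simp
  rw [hstar] at h0
  have e1 : M⁻¹ *ᵥ (M *ᵥ u) = u := by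
    rw [Matrix.mulVec_mulVec, Matrix.nonsing_inv_mul M hu, Matrix.one_mulVec]
  have e2 : (M *ᵥ u) ⬝ᵥ (M⁻¹ *ᵥ c) = u ⬝ᵥ c := by
    rw [Matrix.dotProduct_mulVec, ← Matrix.mulVec_transpose, Matrix.transpose_nonsing_inv,
      hsymm, Matrix.mulVec_mulVec, Matrix.nonsing_inv_mul M hu, Matrix.one_mulVec]
  have expand : (c - M *ᵥ u) ⬝ᵥ (M⁻¹ *ᵥ (c - M *ᵥ u))
      = c ⬝ᵥ (M⁻¹ *ᵥ c) - c ⬝ᵥ u - u ⬝ᵥ c + u ⬝ᵥ (M *ᵥ u) := by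
    rw [Matrix.mulVec_sub, sub_dotProduct, dotProduct_sub, dotProduct_sub,
      e1, e2]
    rw [dotProduct_comm (M *ᵥ u) u]
    ring
  rw [expand] at h0
  have hc : c ⬝ᵥ u = u ⬝ᵥ c := dotProduct_comm c u
  linarith

private lemma aux_kerMat_posSemidef (k : Matrix ι ι ℝ) (hk : k.PosSemidef) (X : List ι) :
    (kerMat k X).PosSemidef := hk.submatrix X.get

private lemma aux_M_posDef (k : Matrix ι ι ℝ) (ρ2 : ι → ℝ) (hk : k.PosSemidef)
    (hρ : ∀ x, 0 < ρ2 x) (X : List ι) : (kerMat k X + noiseMat ρ2 X).PosDef :=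
  Matrix.PosDef.posSemidef_add (aux_kerMat_posSemidef k hk X)
    (Matrix.PosDef.diagonal fun _ => hρ _)

private lemma aux_k_symm (k : Matrix ι ι ℝ) (hk : k.PosSemidef) (a b : ι) : k a b = k b a := by
  have := hk.1
  rw [Matrix.IsHermitian] at this
  conv_lhs => rw [← this]
  simp [Matrix.conjTranspose_apply]

private lemma aux_postVar_eq (k : Matrix ι ι ℝ) (ρ2 : ι → ℝ) (hk : k.PosSemidef)
    (X : List ι) (x : ι) :
    postVar k ρ2 X x = k x x -
      (fun i => k x (X.get i)) ⬝ᵥ ((kerMat k X + noiseMat ρ2 X)⁻¹ *ᵥ fun i => k x (X.get i)) := by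
  unfold postVar postCov
  congr 1
  rw [dotProduct, Finset.sum_congr rfl]
  intro i _
  rw [Matrix.mulVec, dotProduct, Finset.mul_sum, Finset.sum_congr rfl]
  intro j _
  rw [aux_k_symm k hk (X.get j) x]
  ring

private lemma aux_kernel_quad (k : Matrix ι ι ℝ) (hk : k.PosSemidef) (x : ι) (X : List ι)
    (u : Fin X.length → ℝ) :
    0 ≤ k x x - 2 * (u ⬝ᵥ fun i => k x (X.get i)) + u ⬝ᵥ (kerMat k X *ᵥ u) := by
  have hps : (kerMat k (x :: X)).PosSemidef := hk.submatrix _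
  have h0 : (0:ℝ) ≤ ∑ i : Fin (X.length+1), ((Fin.cons 1 (fun j => -u j) : Fin (X.length+1) → ℝ) i) *
      ∑ j : Fin (X.length+1), k ((x::X).get i) ((x::X).get j) * (Fin.cons 1 (fun j => -u j) : Fin (X.length+1) → ℝ) j := by
    simpa [dotProduct, Matrix.mulVec, kerMat] using hps.dotProduct_mulVec_nonneg (Fin.cons 1 fun i => -u i)
  have hget : ∀ i : Fin X.length, (x::X).get i.succ = X.get i := fun i => rfl
  have hs : ∀ i : Fin X.length, k (X.get i) x = k x (X.get i) := fun i => aux_k_symm k hk _ x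
  simp only [Fin.sum_univ_succ, Fin.cons_zero, Fin.cons_succ, List.get_cons_zero, hget,
    hs, one_mul, mul_one, neg_mul, mul_neg, neg_neg, mul_add,
    Finset.sum_neg_distrib, Finset.sum_add_distrib] at h0
  simp only [dotProduct, Matrix.mulVec, kerMat, Matrix.of_apply, Finset.mul_sum]
  have e1 : ∑ i : Fin X.length, k x (X.get i) * u i = ∑ i : Fin X.length, u i * k x (X.get i) :=
    Finset.sum_congr rfl fun i _ => mul_comm _ _
  have e2 : ∑ i : Fin X.length, 2 * (u i * k x (X.get i))
      = (∑ i : Fin X.length, u i * k x (X.get i)) + ∑ i : Fin X.length, u i * k x (X.get i) := by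
    rw [← Finset.sum_add_distrib]; exact Finset.sum_congr rfl fun i _ => by ring
  have e3 : ∑ i : Fin X.length, u i * ∑ j : Fin X.length, k (X.get i) (X.get j) * u j
      = ∑ i : Fin X.length, ∑ j : Fin X.length, u i * (k (X.get i) (X.get j) * u j) :=
    Finset.sum_congr rfl fun i _ => Finset.mul_sum _ _ _
  rw [e1, e3] at h0
  rw [e2]
  linarith

private lemma aux_postVar_le_diag (k : Matrix ι ι ℝ) (ρ2 : ι → ℝ) (hk : k.PosSemidef)
    (hρ : ∀ x, 0 < ρ2 x) (X : List ι) (x : ι) : postVar k ρ2 X x ≤ k x x := by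
  rw [aux_postVar_eq k ρ2 hk X x]
  have h := (aux_M_posDef k ρ2 hk hρ X).inv.posSemidef.dotProduct_mulVec_nonneg (fun i => k x (X.get i))
  simp only [star_trivial] at h
  linarith

private lemma aux_postVar_pos (k : Matrix ι ι ℝ) (ρ2 : ι → ℝ) (hk : k.PosSemidef)
    (hρ : ∀ x, 0 < ρ2 x) (X : List ι) (x : ι) (hx : 0 < k x x) : 0 < postVar k ρ2 X x := by
  set M := kerMat k X + noiseMat ρ2 X with hMdef
  have hM := aux_M_posDef k ρ2 hk hρ X
  set c : Fin X.length → ℝ := fun i => k x (X.get i) with hcdef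
  set u : Fin X.length → ℝ := M⁻¹ *ᵥ c with hudef
  have hMu : M *ᵥ u = c := by
    rw [hudef, Matrix.mulVec_mulVec, Matrix.mul_nonsing_inv M hM.det_pos.ne'.isUnit,
      Matrix.one_mulVec]
  have hq := aux_kernel_quad k hk x X u
  have hK : kerMat k X *ᵥ u = M *ᵥ u - noiseMat ρ2 X *ᵥ u := by
    rw [hMdef, Matrix.add_mulVec]; ring_nf
  have hsplit : u ⬝ᵥ (kerMat k X *ᵥ u) = u ⬝ᵥ c - u ⬝ᵥ (noiseMat ρ2 X *ᵥ u) := by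
    rw [hK, dotProduct_sub, hMu]
  rw [hsplit] at hq
  have hpv : postVar k ρ2 X x = k x x - c ⬝ᵥ u := aux_postVar_eq k ρ2 hk X x
  have hcu : c ⬝ᵥ u = u ⬝ᵥ c := dotProduct_comm c u
  by_cases hu0 : u = 0
  · rw [hpv, hcu, hu0]
    simpa using hx
  · have hP : (0:ℝ) < u ⬝ᵥ (noiseMat ρ2 X *ᵥ u) := by
      have := (Matrix.PosDef.diagonal (fun i => hρ (X.get i))).dotProduct_mulVec_pos hu0
      simpa [noiseMat] using this
    rw [hpv, hcu]
    linarith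

private lemma aux_sum_castLE {m d : ℕ} (h : d ≤ m) (f : Fin m → ℝ)
    (hz : ∀ i : Fin m, ¬ ((i:ℕ) < d) → f i = 0) :
    ∑ i, f i = ∑ j : Fin d, f (Fin.castLE h j) := by
  classical
  rw [show ∑ j : Fin d, f (Fin.castLE h j)
      = ∑ i ∈ Finset.univ.map ⟨Fin.castLE h, Fin.castLE_injective h⟩, f i by
    rw [Finset.sum_map]; rfl]
  symm
  apply Finset.sum_subset (Finset.subset_univ _)
  intro i _ hi
  apply hz
  intro hlt
  refine hi ?_
  simp only [Finset.mem_map, Finset.mem_univ, Function.Embedding.coeFn_mk]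
  exact ⟨⟨i, hlt⟩, trivial, rfl⟩

private lemma aux_postVar_append_le (k : Matrix ι ι ℝ) (ρ2 : ι → ℝ) (hk : k.PosSemidef)
    (hρ : ∀ x, 0 < ρ2 x) (D B : List ι) (x : ι) :
    postVar k ρ2 (D ++ B) x ≤ postVar k ρ2 D x := by
  have hle : D.length ≤ (D ++ B).length := by
    rw [List.length_append]; exact Nat.le_add_right _ _
  have hget : ∀ j : Fin D.length, (D ++ B).get (Fin.castLE hle j) = D.get j := by
    intro j
    simp [List.get_eq_getElem, List.getElem_append_left j.isLt]
  set MD := kerMat k D + noiseMat ρ2 D with hMDdef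
  have hMD := aux_M_posDef k ρ2 hk hρ D
  set cD : Fin D.length → ℝ := fun i => k x (D.get i) with hcDdef
  set uD : Fin D.length → ℝ := MD⁻¹ *ᵥ cD with huDdef
  set MX := kerMat k (D ++ B) + noiseMat ρ2 (D ++ B) with hMXdef
  have hMX := aux_M_posDef k ρ2 hk hρ (D ++ B)
  set cX : Fin (D ++ B).length → ℝ := fun i => k x ((D ++ B).get i) with hcXdef
  set u : Fin (D ++ B).length → ℝ :=
    fun i => if h' : (i:ℕ) < D.length then uD ⟨i, h'⟩ else 0 with hudef
  have hu0 : ∀ i : Fin (D ++ B).length, ¬((i:ℕ) < D.length) → u i = 0 := fun i h' => dif_neg h'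
  have hucast : ∀ j : Fin D.length, u (Fin.castLE hle j) = uD j := by
    intro j
    have : ((Fin.castLE hle j : Fin (D ++ B).length) : ℕ) < D.length := j.isLt
    simp only [hudef]
    rw [dif_pos this]
    exact congrArg uD (Fin.ext rfl)
  have ha : u ⬝ᵥ cX = uD ⬝ᵥ cD := by
    rw [dotProduct, aux_sum_castLE hle _ (fun i hi => by rw [hu0 i hi, zero_mul])]
    exact Finset.sum_congr rfl fun j _ => by rw [hucast]; simp only [hcXdef, hget]; rfl
  have hMent : ∀ i j : Fin D.length, MX (Fin.castLE hle i) (Fin.castLE hle j) = MD i j := by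
    intro i j
    rw [hMXdef, hMDdef]
    simp only [Matrix.add_apply, kerMat, noiseMat, Matrix.of_apply, Matrix.diagonal_apply,
      hget, Fin.castLE_inj]
  have hMuD : MD *ᵥ uD = cD := by
    rw [huDdef, Matrix.mulVec_mulVec, Matrix.mul_nonsing_inv MD hMD.det_pos.ne'.isUnit,
      Matrix.one_mulVec]
  have hb : u ⬝ᵥ (MX *ᵥ u) = uD ⬝ᵥ cD := by
    rw [dotProduct, aux_sum_castLE hle _ (fun i hi => by rw [hu0 i hi, zero_mul])]
    rw [← hMuD, dotProduct]
    refine Finset.sum_congr rfl fun i _ => ?_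
    rw [hucast]
    congr 1
    rw [Matrix.mulVec, dotProduct,
      aux_sum_castLE hle _ (fun j hj => by rw [hu0 j hj, mul_zero]), Matrix.mulVec,
      dotProduct]
    exact Finset.sum_congr rfl fun j _ => by rw [hucast, hMent]
  have key := aux_quad_lb hMX cX u
  rw [ha, hb] at key
  have hqD : cD ⬝ᵥ (MD⁻¹ *ᵥ cD) = uD ⬝ᵥ cD := dotProduct_comm _ _
  rw [aux_postVar_eq k ρ2 hk (D ++ B) x, aux_postVar_eq k ρ2 hk D x]
  have h1 : (fun i => k x ((D ++ B).get i)) ⬝ᵥ (MX⁻¹ *ᵥ fun i => k x ((D ++ B).get i))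
      = cX ⬝ᵥ (MX⁻¹ *ᵥ cX) := rfl
  have h2 : (fun i => k x (D.get i)) ⬝ᵥ (MD⁻¹ *ᵥ fun i => k x (D.get i))
      = cD ⬝ᵥ (MD⁻¹ *ᵥ cD) := rfl
  rw [h1, h2, hqD]
  linarith

private lemma aux_row_zero (k : Matrix ι ι ℝ) (hk : k.PosSemidef) (x z : ι)
    (hx : k x x = 0) : k x z = 0 := by
  obtain ⟨Bm, hBm⟩ : ∃ Bm : Matrix ι ι ℝ, k = Bmᴴ * Bm := by
    classical
    open scoped MatrixOrder in
    obtain ⟨Bm, hBm⟩ := CStarAlgebra.nonneg_iff_eq_star_mul_self.mp hk.nonneg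
    exact ⟨Bm, by rw [hBm, Matrix.star_eq_conjTranspose]⟩
  have h0 : ∑ w, Bm w x ^ 2 = 0 := by
    have h := hx
    rw [hBm, Matrix.mul_apply] at h
    simpa [Matrix.conjTranspose_apply, sq] using h
  have h1 : ∀ w, Bm w x = 0 := by
    intro w
    have := (Finset.sum_eq_zero_iff_of_nonneg (fun w _ => sq_nonneg (Bm w x))).mp h0 w
      (Finset.mem_univ w)
    exact pow_eq_zero_iff two_ne_zero |>.mp this
  rw [hBm, Matrix.mul_apply]
  simp [Matrix.conjTranspose_apply, h1]

end AuxMarkovBoundary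

/-- If `B ⊆ S` is an ε-approximate Markov boundary of `x` in `S`, i.e.
`Var(f_x ∣ D_n, y_B) ≤ η_S²(x) + ε`, then
`σ_n²(x) ≤ 2σ² I(f_x; y_B ∣ D_n) + η_S²(x) + ε`, where `σ² = max_z k(z,z)`. -/
theorem postVar_le_pointGain_add_irreducible [Fintype ι] [DecidableEq ι] [Nonempty ι]
    (k : Matrix ι ι ℝ) (ρ2 : ι → ℝ)
    (hk : k.PosSemidef) (hρ : ∀ x, 0 < ρ2 x)
    (S : Finset ι) (ε : ℝ) (hε : 0 < ε)
    (D : List ι) (x : ι)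
    (B : List ι) (hB : ∀ z ∈ B, z ∈ S)
    (hmb : postVar k ρ2 (D ++ B) x ≤ noiselessCondVar k S x + ε) :
    postVar k ρ2 D x ≤
      2 * (⨆ z : ι, k z z) * pointGain k ρ2 x D B + noiselessCondVar k S x + ε := by
  by_cases hx0 : k x x = 0
  · have hz : ∀ z, k x z = 0 := fun z => aux_row_zero k hk x z hx0
    have hD : postVar k ρ2 D x = 0 := by
      unfold postVar postCov; simp [hz]
    have hDB : postVar k ρ2 (D ++ B) x = 0 := by
      unfold postVar postCov; simp [hz]
    have hη : noiselessCondVar k S x = 0 := by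
      unfold noiselessCondVar; simp [hz]
    unfold pointGain
    rw [hD, hDB, hη]
    simp only [Real.log_zero, sub_zero, mul_zero, zero_add, add_zero]
    linarith
  · have h00 : 0 ≤ k x x := by simpa using hk.dotProduct_mulVec_nonneg (Pi.single x 1)
    have hxpos : 0 < k x x := lt_of_le_of_ne h00 (Ne.symm hx0)
    have hapos := aux_postVar_pos k ρ2 hk hρ D x hxpos
    have hbpos := aux_postVar_pos k ρ2 hk hρ (D ++ B) x hxpos
    have hba := aux_postVar_append_le k ρ2 hk hρ D B x
    have haK := aux_postVar_le_diag k ρ2 hk hρ D x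
    have hK : k x x ≤ ⨆ z : ι, k z z :=
      le_ciSup (Set.Finite.bddAbove (Set.finite_range fun z => k z z)) x
    set a := postVar k ρ2 D x
    set b := postVar k ρ2 (D ++ B) x
    set σ2 := ⨆ z : ι, k z z with hσ2
    have hL0 : Real.log b ≤ Real.log a := Real.log_le_log hbpos hba
    have hkey : a - b ≤ a * (Real.log a - Real.log b) := by
      have h := Real.log_le_sub_one_of_pos (div_pos hbpos hapos)
      rw [Real.log_div hbpos.ne' hapos.ne'] at h
      have h2 := mul_le_mul_of_nonneg_left h hapos.le
      have hd : a * (b / a) = b := by field_simp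
      nlinarith
    have hmul : a * (Real.log a - Real.log b) ≤ σ2 * (Real.log a - Real.log b) :=
      mul_le_mul_of_nonneg_right (haK.trans hK) (by linarith)
    have hpg : pointGain k ρ2 x D B = 1 / 2 * (Real.log a - Real.log b) := rfl
    rw [hpg]
    have hring : 2 * σ2 * (1 / 2 * (Real.log a - Real.log b))
        = σ2 * (Real.log a - Real.log b) := by ring
    rw [hring]
    linarith

end TransductiveAL
end

section
/- Greedy maximization under approximate submodularity: Let F be a non-negative, monotone set function on subsets of a finite ground set 𝒮 with F(∅) = 0, let k ≥ 1, let B'_k = (x_1, …, x_k) be the greedy sequence defined by x_i ∈ argmax_{x∈𝒮} [F({x_1,…,x_{i-1}} ∪ {x}) − F({x_1,…,x_{i-1}})], and let κ(k) be the submodularity ratio of F up to cardinality k: κ(k) = min over B ⊆ B'_k and X ⊆ 𝒮 with |X| ≤ k and B ∩ X = ∅ of ( Σ_{x∈X} [F(B∪{x}) − F(B)] ) / ( F(B∪X) − F(B) ), with 0/0 interpreted as 1. Then F(B'_k) ≥ (1 − e^{−κ(k)}) · max_{B⊆𝒮, |B|=k} F(B). -/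
/-- greedy maximization under approximate submodularity: if `F` is a
non-negative monotone set function with `F ∅ = 0`, `B'_b = {x₁, …, x_b}` is the greedy
sequence, and `κ(b)` is the submodularity ratio of `F` up to cardinality `b` (with `0/0`
interpreted as `1`), then `F(B'_b) ≥ (1 − e^{−κ(b)}) · max_{|B| = b} F(B)`. -/
theorem greedy_approx_of_submodularity_ratio {α : Type*} [Fintype α] [DecidableEq α]
    (F : Finset α → ℝ) (hF0 : F ∅ = 0) (hFnn : ∀ B, 0 ≤ F B)
    (hmono : ∀ ⦃B' B : Finset α⦄, B' ⊆ B → F B' ≤ F B)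
    (b : ℕ) (hb : 1 ≤ b) (hbcard : b ≤ Fintype.card α)
    (xs : ℕ → α)
    (hgreedy : ∀ i < b, ∀ x : α,
      F ((Finset.range i).image xs ∪ {x}) - F ((Finset.range i).image xs) ≤
        F ((Finset.range i).image xs ∪ {xs i}) - F ((Finset.range i).image xs))
    (κ : ℝ)
    (hκ : κ = sInf { r : ℝ | ∃ B X : Finset α,
      B ⊆ (Finset.range b).image xs ∧ X.card ≤ b ∧ Disjoint B X ∧
      r = if F (B ∪ X) - F B = 0 then 1
          else (∑ x ∈ X, (F (B ∪ {x}) - F B)) / (F (B ∪ X) - F B) }) :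
    (1 - Real.exp (-κ)) * sSup { v : ℝ | ∃ B : Finset α, B.card = b ∧ v = F B } ≤
      F ((Finset.range b).image xs) := by
  classical
  set S : ℕ → Finset α := fun i => (Finset.range i).image xs with hS
  set K : Set ℝ := { r : ℝ | ∃ B X : Finset α,
      B ⊆ (Finset.range b).image xs ∧ X.card ≤ b ∧ Disjoint B X ∧
      r = if F (B ∪ X) - F B = 0 then 1
          else (∑ x ∈ X, (F (B ∪ {x}) - F B)) / (F (B ∪ X) - F B) } with hK
  have hone : (1 : ℝ) ∈ K := by
    refine ⟨∅, ∅, by simp, by simp, by simp, by simp⟩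
  have hbdd : ∀ r ∈ K, (0 : ℝ) ≤ r := by
    rintro r ⟨B, X, hB, hX, hdisj, rfl⟩
    split_ifs with h
    · norm_num
    · have hden : 0 < F (B ∪ X) - F B := by
        have := hmono (Finset.subset_union_left (s₁ := B) (s₂ := X))
        cases lt_or_eq_of_le (by linarith : (0:ℝ) ≤ F (B ∪ X) - F B) with
        | inl h' => exact h'
        | inr h' => exact absurd h'.symm h
      apply div_nonneg _ hden.le
      apply Finset.sum_nonneg
      intro x _
      have := hmono (Finset.subset_union_left (s₁ := B) (s₂ := {x}))
      linarith
  have hκ0 : 0 ≤ κ := by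
    rw [hκ]
    exact le_csInf ⟨1, hone⟩ hbdd
  have hκ1 : κ ≤ 1 := by
    rw [hκ]
    exact csInf_le ⟨0, hbdd⟩ hone
  have hSsucc : ∀ i, S (i + 1) = S i ∪ {xs i} := by
    intro i
    ext a
    simp only [hS, Finset.mem_union, Finset.mem_image, Finset.mem_range,
      Finset.mem_singleton, Nat.lt_succ_iff_lt_or_eq]
    constructor
    · rintro ⟨j, hj | rfl, rfl⟩
      · exact Or.inl ⟨j, hj, rfl⟩
      · exact Or.inr rfl
    · rintro (⟨j, hj, rfl⟩ | rfl)
      · exact ⟨j, Or.inl hj, rfl⟩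
      · exact ⟨i, Or.inr rfl, rfl⟩
  have hSmono : ∀ i, i ≤ b → S i ⊆ S b := by
    intro i hi
    exact Finset.image_subset_image (Finset.range_subset_range.2 hi)
  have hb1 : (1 : ℝ) ≤ (b : ℝ) := by exact_mod_cast hb
  have hκb : κ / b ≤ 1 := by
    rw [div_le_one (by linarith)]
    linarith
  have hbpos : (0:ℝ) < b := by linarith
  -- main lemma: for any B* with card b
  have main : ∀ Bs : Finset α, Bs.card = b → (1 - Real.exp (-κ)) * F Bs ≤ F (S b) := by
    intro Bs hBs
    -- step inequality
    have step : ∀ i < b, κ * (F Bs - F (S i)) ≤ b * (F (S (i+1)) - F (S i)) := by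
      intro i hi
      have hdelta : 0 ≤ F (S (i+1)) - F (S i) := by
        rw [hSsucc]
        have := hmono (Finset.subset_union_left (s₁ := S i) (s₂ := {xs i}))
        linarith
      set X : Finset α := Bs \ S i with hX
      have hunion : S i ∪ X = S i ∪ Bs := Finset.union_sdiff_self_eq_union
      have hBsle : F Bs ≤ F (S i ∪ X) := by
        rw [hunion]; exact hmono Finset.subset_union_right
      by_cases hden : F (S i ∪ X) - F (S i) = 0
      · have : F Bs - F (S i) ≤ 0 := by linarith
        have : κ * (F Bs - F (S i)) ≤ 0 := mul_nonpos_of_nonneg_of_nonpos hκ0 this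
        nlinarith
      · have hmem : (∑ x ∈ X, (F (S i ∪ {x}) - F (S i))) / (F (S i ∪ X) - F (S i)) ∈ K := by
          refine ⟨S i, X, hSmono i hi.le, ?_, Finset.sdiff_disjoint.symm, by rw [if_neg hden]⟩
          calc X.card ≤ Bs.card := Finset.card_le_card (Finset.sdiff_subset)
          _ = b := hBs
        have hκle : κ ≤ (∑ x ∈ X, (F (S i ∪ {x}) - F (S i))) / (F (S i ∪ X) - F (S i)) := by
          rw [hκ]; exact csInf_le ⟨0, hbdd⟩ hmem
        have hdenpos : 0 < F (S i ∪ X) - F (S i) := by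
          have := hmono (Finset.subset_union_left (s₁ := S i) (s₂ := X))
          cases lt_or_eq_of_le (by linarith : (0:ℝ) ≤ F (S i ∪ X) - F (S i)) with
          | inl h' => exact h'
          | inr h' => exact absurd h'.symm hden
        have h1 : κ * (F (S i ∪ X) - F (S i)) ≤ ∑ x ∈ X, (F (S i ∪ {x}) - F (S i)) := by
          rw [← le_div_iff₀ hdenpos] at *; exact hκle
        have h2 : ∑ x ∈ X, (F (S i ∪ {x}) - F (S i)) ≤ X.card * (F (S (i+1)) - F (S i)) := by
          calc ∑ x ∈ X, (F (S i ∪ {x}) - F (S i))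
              ≤ ∑ _x ∈ X, (F (S (i+1)) - F (S i)) := by
                apply Finset.sum_le_sum
                intro x _
                rw [hSsucc]
                exact hgreedy i hi x
            _ = X.card * (F (S (i+1)) - F (S i)) := by
                rw [Finset.sum_const, nsmul_eq_mul]
        have hXb : (X.card : ℝ) ≤ b := by
          exact_mod_cast hBs ▸ Finset.card_le_card (Finset.sdiff_subset)
        have h3 : (X.card : ℝ) * (F (S (i+1)) - F (S i)) ≤ b * (F (S (i+1)) - F (S i)) :=
          mul_le_mul_of_nonneg_right hXb hdelta
        have h4 : κ * (F Bs - F (S i)) ≤ κ * (F (S i ∪ X) - F (S i)) := by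
          apply mul_le_mul_of_nonneg_left _ hκ0
          linarith
        linarith
    -- induction
    have ind : ∀ i ≤ b, F Bs - F (S i) ≤ (1 - κ / b) ^ i * F Bs := by
      intro i hi
      induction i with
      | zero => simp [hS, hF0]
      | succ j ih =>
        have hj : j < b := hi
        have hind := ih hj.le
        have hstep := step j hj
        have hfac : 0 ≤ 1 - κ / b := by linarith
        have : F Bs - F (S (j+1)) ≤ (1 - κ / b) * (F Bs - F (S j)) := by
          have h5 : κ / b * (F Bs - F (S j)) ≤ F (S (j+1)) - F (S j) := by
            rw [div_mul_eq_mul_div, div_le_iff₀ hbpos]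
            linarith
          have expand : (1 - κ / (b:ℝ)) * (F Bs - F (S j))
              = F Bs - F (S j) - κ / (b:ℝ) * (F Bs - F (S j)) := by ring
          rw [expand]
          linarith
        calc F Bs - F (S (j+1)) ≤ (1 - κ / b) * (F Bs - F (S j)) := this
          _ ≤ (1 - κ / b) * ((1 - κ / b) ^ j * F Bs) :=
              mul_le_mul_of_nonneg_left hind hfac
          _ = (1 - κ / b) ^ (j+1) * F Bs := by ring
    have hfinal := ind b le_rfl
    have hexp : (1 - κ / b) ^ b ≤ Real.exp (-κ) := by
      have h1 : 1 - κ / b ≤ Real.exp (-(κ / b)) := by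
        have := Real.add_one_le_exp (-(κ / b))
        linarith
      have h2 : (1 - κ / b) ^ b ≤ (Real.exp (-(κ / b))) ^ b :=
        pow_le_pow_left₀ (by linarith) h1 b
      have h3 : (Real.exp (-(κ / b))) ^ b = Real.exp (-κ) := by
        rw [← Real.exp_nat_mul]
        congr 1
        field_simp
      linarith [h2, h3.le, h3.ge]
    have : (1 - κ / b) ^ b * F Bs ≤ Real.exp (-κ) * F Bs :=
      mul_le_mul_of_nonneg_right hexp (hFnn Bs)
    nlinarith
  -- conclude using sSup
  set c : ℝ := 1 - Real.exp (-κ) with hc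
  have hc0 : 0 ≤ c := by
    have : Real.exp (-κ) ≤ 1 := Real.exp_le_one_iff.2 (by linarith)
    simp [hc]; linarith
  rcases eq_or_lt_of_le hc0 with hc0' | hcpos
  · rw [← hc0', zero_mul]
    exact hFnn _
  · have hsup : sSup { v : ℝ | ∃ B : Finset α, B.card = b ∧ v = F B } ≤ F (S b) / c := by
      apply Real.sSup_le
      · rintro v ⟨B, hB, rfl⟩
        rw [le_div_iff₀ hcpos]
        have := main B hB
        linarith [main B hB]
      · exact div_nonneg (hFnn _) hc0
    calc c * sSup { v : ℝ | ∃ B : Finset α, B.card = b ∧ v = F B }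
        ≤ c * (F (S b) / c) := mul_le_mul_of_nonneg_left hsup hc0
      _ = F (S b) := by field_simp
end

section
/- Law of total variance for Gaussian conditioning (identity used in the Markov-boundary lemma): in the Gaussian kernel setting with K_SS = Var(f_S) invertible, for every x ∈ 𝒳 and every multiset B ⊆ S of noisy observation points, Var(f_x | y_B) = Var(f_x | f_S) + zᵀ · Var(f_S | y_B) · z, where z = K_SS^{-1} K_{Sx} with K_{Sx} = Cov(f_S, f_x); the first term is the irreducible uncertainty and the second is the reducible (epistemic) uncertainty. -/
open Matrix Real

namespace TransductiveAL

variable {ι : Type*}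

private lemma sum_swap4 {α β : Type*} [Fintype α] [Fintype β]
    (f : α → α → β → β → ℝ) :
    ∑ i : α, ∑ j : α, ∑ a : β, ∑ c : β, f i j a c
      = ∑ a : β, ∑ c : β, ∑ i : α, ∑ j : α, f i j a c := by
  calc ∑ i : α, ∑ j : α, ∑ a : β, ∑ c : β, f i j a c
      = ∑ i : α, ∑ a : β, ∑ j : α, ∑ c : β, f i j a c :=
        Finset.sum_congr rfl fun i _ => Finset.sum_comm
    _ = ∑ a : β, ∑ i : α, ∑ j : α, ∑ c : β, f i j a c := Finset.sum_comm
    _ = ∑ a : β, ∑ i : α, ∑ c : β, ∑ j : α, f i j a c :=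
        Finset.sum_congr rfl fun a _ => Finset.sum_congr rfl fun i _ => Finset.sum_comm
    _ = ∑ a : β, ∑ c : β, ∑ i : α, ∑ j : α, f i j a c :=
        Finset.sum_congr rfl fun a _ => Finset.sum_comm

/-- law of total variance for Gaussian conditioning: if `K_SS` is
invertible, then for every `x ∈ 𝒳` and every multiset `B ⊆ S`,
`Var(f_x ∣ y_B) = Var(f_x ∣ f_S) + zᵀ Var(f_S ∣ y_B) z` with `z = K_SS⁻¹ K_{Sx}`. -/
theorem postVar_eq_noiselessCondVar_add_quadForm [Fintype ι] [DecidableEq ι]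
    (k : Matrix ι ι ℝ) (ρ2 : ι → ℝ)
    (hk : k.PosSemidef) (hρ : ∀ x, 0 < ρ2 x)
    (S : Finset ι) (hS : IsUnit (kerMatOn k S).det)
    (B : List ι) (hB : ∀ z ∈ B, z ∈ S) (x : ι) :
    postVar k ρ2 B x =
      noiselessCondVar k S x +
        ∑ i : S, ∑ j : S,
          (∑ a : S, (kerMatOn k S)⁻¹ i a * k a.1 x) *
            postCov k ρ2 B i.1 j.1 *
            (∑ a : S, (kerMatOn k S)⁻¹ j a * k a.1 x) := by
  classical
  -- notation
  set KS := kerMatOn k S with hKS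
  set M := (kerMat k B + noiseMat ρ2 B)⁻¹ with hM
  have hsym : ∀ a b : ι, k a b = k b a := by
    intro a b
    have h := hk.1
    conv_lhs => rw [← h]
    simp [Matrix.conjTranspose_apply]
  have hmulinv : KS * KS⁻¹ = 1 := Matrix.mul_nonsing_inv _ hS
  -- z vector
  set z : S → ℝ := fun i => ∑ a : S, KS⁻¹ i a * k a.1 x with hz
  -- Step A : ∑ j, k p j * z j = k p x  for p ∈ S
  have stepA : ∀ (p : ι) (hp : p ∈ S), ∑ j : S, k p j.1 * z j = k p x := by
    intro p hp
    have h1 : ∀ a : S, ∑ j : S, k p j.1 * KS⁻¹ j a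
        = if (⟨p, hp⟩ : S) = a then 1 else 0 := by
      intro a
      have h2 := congrFun (congrFun hmulinv ⟨p, hp⟩) a
      rw [Matrix.mul_apply] at h2
      simpa [hKS, kerMatOn, Matrix.one_apply] using h2
    calc ∑ j : S, k p j.1 * z j
        = ∑ j : S, ∑ a : S, k p j.1 * KS⁻¹ j a * k a.1 x := by
          refine Finset.sum_congr rfl fun j _ => ?_
          rw [hz, Finset.mul_sum]
          exact Finset.sum_congr rfl fun a _ => by ring
      _ = ∑ a : S, (∑ j : S, k p j.1 * KS⁻¹ j a) * k a.1 x := by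
          rw [Finset.sum_comm]
          exact Finset.sum_congr rfl fun a _ => (Finset.sum_mul _ _ _).symm
      _ = k p x := by
          simp only [h1]
          simp
  -- Step B : ∑ i, z i * k i p = k p x for p ∈ S
  have stepB : ∀ (p : ι) (hp : p ∈ S), ∑ i : S, z i * k i.1 p = k p x := by
    intro p hp
    rw [← stepA p hp]
    exact Finset.sum_congr rfl fun i _ => by rw [hsym i.1 p]; ring
  -- quadratic form identity
  have hQ : (∑ i : S, ∑ j : S, z i * postCov k ρ2 B i.1 j.1 * z j)
      = (∑ i : S, z i * k i.1 x)
        - ∑ a : Fin B.length, ∑ c : Fin B.length,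
            k x (B.get a) * M a c * k (B.get c) x := by
    have expand : ∀ i j : S, z i * postCov k ρ2 B i.1 j.1 * z j
        = z i * k i.1 j.1 * z j
          - ∑ a : Fin B.length, ∑ c : Fin B.length,
              z i * (k i.1 (B.get a) * M a c * k (B.get c) j.1) * z j := by
      intro i j
      rw [postCov, ← hM, mul_sub, sub_mul]
      congr 1
      simp only [Finset.mul_sum, Finset.sum_mul]
    simp only [expand, Finset.sum_sub_distrib]
    congr 1
    · -- first term
      refine Finset.sum_congr rfl fun i _ => ?_
      have : ∑ j : S, z i * k i.1 j.1 * z j = z i * ∑ j : S, k i.1 j.1 * z j := by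
        rw [Finset.mul_sum]
        exact Finset.sum_congr rfl fun j _ => by ring
      rw [this, stepA i.1 i.2]
    · -- second term
      rw [sum_swap4 (fun i j a c => z i * (k i.1 (B.get a) * M a c * k (B.get c) j.1) * z j)]
      refine Finset.sum_congr rfl fun a _ => Finset.sum_congr rfl fun c _ => ?_
      have ha : (B.get a) ∈ S := hB _ (B.get_mem _)
      have hc : (B.get c) ∈ S := hB _ (B.get_mem _)
      calc ∑ i : S, ∑ j : S, z i * (k i.1 (B.get a) * M a c * k (B.get c) j.1) * z j
          = ∑ i : S, (z i * k i.1 (B.get a)) * M a c * ∑ j : S, k (B.get c) j.1 * z j := by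
            refine Finset.sum_congr rfl fun i _ => ?_
            rw [Finset.mul_sum]
            exact Finset.sum_congr rfl fun j _ => by ring
        _ = (∑ i : S, z i * k i.1 (B.get a)) * M a c * k (B.get c) x := by
            rw [stepA _ hc, Finset.sum_mul, Finset.sum_mul]
        _ = k x (B.get a) * M a c * k (B.get c) x := by
            rw [stepB _ ha, hsym]
  -- final assembly
  have hT : ∑ i : S, ∑ j : S, k x i.1 * KS⁻¹ i j * k j.1 x = ∑ i : S, z i * k i.1 x := by
    refine Finset.sum_congr rfl fun i _ => ?_
    have h1 : ∑ j : S, k x i.1 * KS⁻¹ i j * k j.1 x = k x i.1 * z i := by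
      rw [hz, Finset.mul_sum]
      exact Finset.sum_congr rfl fun j _ => by ring
    rw [h1, hsym x i.1]; ring
  show postVar k ρ2 B x = noiselessCondVar k S x
      + ∑ i : S, ∑ j : S, z i * postCov k ρ2 B i.1 j.1 * z j
  rw [hQ, noiselessCondVar, ← hKS, hT, postVar, postCov, ← hM]
  ring


end TransductiveAL
end

section
/- Submodularity of the batch-selection objective when S ⊆ A: in the Gaussian kernel setting with finite target space A and sample space S ⊆ A, the set function F(B) = I(f_A; y_B | D) on multisets B ⊆ S is submodular: for all B' ⊆ B ⊆ S and every x ∈ S, F(B ∪ {x}) − F(B) ≤ F(B' ∪ {x}) − F(B'). Consequently, the submodularity ratio of F up to any cardinality k is at least 1, and the greedy batch is a (1 − 1/e)-approximation of the optimal batch of the same size. -/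
open Matrix Real

namespace TransductiveAL

variable {ι : Type*}

section Aux
variable [DecidableEq ι]

noncomputable def nAmat (ρ2 : ι → ℝ) (A : Finset ι) (E : List ι) :
    Matrix A A ℝ :=
  Matrix.diagonal fun a => (E.count a.1 : ℝ) / ρ2 a.1

/-- indicator vector of x in A -/
def indA (A : Finset ι) (x : ι) : A → ℝ := fun a => if (a : ι) = x then 1 else 0

lemma nAmat_nil (ρ2 : ι → ℝ) (A : Finset ι) : nAmat ρ2 A [] = 0 := by
  simp [nAmat, Matrix.diagonal_zero]

lemma nAmat_append (ρ2 : ι → ℝ) (A : Finset ι) (E F : List ι) :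
    nAmat ρ2 A (E ++ F) = nAmat ρ2 A E + nAmat ρ2 A F := by
  have h : (fun a : {x // x ∈ A} => (((E ++ F).count a.1 : ℕ) : ℝ) / ρ2 a.1)
      = (fun a : {x // x ∈ A} => ((E.count a.1 : ℕ) : ℝ) / ρ2 a.1)
        + fun a : {x // x ∈ A} => ((F.count a.1 : ℕ) : ℝ) / ρ2 a.1 := by
    funext a
    simp only [List.count_append, Pi.add_apply]
    push_cast
    ring
  rw [nAmat, h]
  ext a b
  by_cases hab : a = b
  · subst hab; simp [Matrix.diagonal_apply_eq, nAmat]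
  · simp [Matrix.diagonal_apply_ne _ hab, nAmat]

lemma nAmat_posSemidef {ρ2 : ι → ℝ} (hρ : ∀ x, 0 < ρ2 x) (A : Finset ι) (E : List ι) :
    (nAmat ρ2 A E).PosSemidef := by
  refine Matrix.PosSemidef.diagonal fun a => ?_
  exact div_nonneg (by positivity) (hρ _).le

lemma nAmat_single (ρ2 : ι → ℝ) (A : Finset ι) (x : ι) :
    nAmat ρ2 A [x] = (ρ2 x)⁻¹ • (Matrix.replicateCol Unit (indA A x) * Matrix.replicateRow Unit (indA A x)) := by
  ext a b
  simp only [nAmat, Matrix.smul_apply, Matrix.mul_apply, Matrix.replicateCol_apply, Matrix.replicateRow_apply,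
    Finset.univ_unique, Finset.sum_const, Finset.card_singleton, one_smul, indA, smul_eq_mul]
  by_cases hab : a = b
  · subst hab
    by_cases hax : (a : ι) = x
    · subst hax
      simp [Matrix.diagonal_apply_eq, div_eq_inv_mul]
    · rw [Matrix.diagonal_apply_eq, if_neg hax]
      simp [List.count_singleton]
      left; exact fun h => hax h.symm
  · rw [Matrix.diagonal_apply_ne _ hab]
    by_cases hax : (a : ι) = x
    · have hbx : ¬ (b : ι) = x := fun hb => hab (Subtype.ext (hax.trans hb.symm))
      rw [if_neg hbx]
      ring
    · rw [if_neg hax]; ring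

/-- selection matrix -/
noncomputable def phiM (A : Finset ι) (E : List ι) : Matrix (Fin E.length) {x // x ∈ A} ℝ :=
  Matrix.of fun i a => if (a : ι) = E.get i then 1 else 0

lemma sum_ind {A : Finset ι} {c : ι} (hc : c ∈ A) (f : {x // x ∈ A} → ℝ) :
    ∑ a : {x // x ∈ A}, (if (a : ι) = c then (1:ℝ) else 0) * f a = f ⟨c, hc⟩ := by
  rw [Fintype.sum_eq_single (⟨c, hc⟩ : {x // x ∈ A})]
  · simp
  · intro b hb
    rw [if_neg, zero_mul]
    exact fun h => hb (Subtype.ext h)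

lemma sum_ind' {A : Finset ι} {c : ι} (hc : c ∈ A) (f : {x // x ∈ A} → ℝ) :
    ∑ a : {x // x ∈ A}, f a * (if (a : ι) = c then (1:ℝ) else 0) = f ⟨c, hc⟩ := by
  rw [← sum_ind hc f]
  exact Finset.sum_congr rfl fun a _ => mul_comm _ _

lemma count_fin_sum (E : List ι) (c : ι) :
    ∑ i : Fin E.length, (if (c : ι) = E.get i then (1:ℝ) else 0) = E.count c := by
  induction E with
  | nil => simp
  | cons x E ih =>
    simp only [List.length_cons]
    rw [Fin.sum_univ_succ]
    simp only [List.count_cons, List.get_cons_zero, beq_iff_eq,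
      show ∀ i : Fin E.length, (x :: E).get i.succ = E.get i from fun i => rfl]
    rw [ih]
    push_cast
    by_cases hxc : x = c
    · simp [hxc]
      ring
    · simp [hxc, Ne.symm hxc]

variable {k : Matrix ι ι ℝ} {ρ2 : ι → ℝ} {A : Finset ι} {E : List ι}

lemma memE (hE : ∀ z ∈ E, z ∈ A) (i : Fin E.length) : E.get i ∈ A :=
  hE _ (E.get_mem i)

lemma kerMat_eq (hE : ∀ z ∈ E, z ∈ A) :
    kerMat k E = phiM A E * kerMatOn k A * (phiM A E)ᵀ := by
  ext i j
  simp only [kerMat, Matrix.of_apply, Matrix.mul_apply, Matrix.transpose_apply, phiM]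
  rw [sum_ind' (memE hE j) (fun b => ∑ a : {x // x ∈ A},
    (if (a : ι) = E.get i then (1:ℝ) else 0) * kerMatOn k A a b)]
  rw [sum_ind (memE hE i) (fun a => kerMatOn k A a ⟨E.get j, memE hE j⟩)]
  rfl

lemma mulPhiT (hE : ∀ z ∈ E, z ∈ A) :
    kerMatOn k A * (phiM A E)ᵀ
      = Matrix.of (fun (a : {x // x ∈ A}) (i : Fin E.length) => k a.1 (E.get i)) := by
  ext a i
  simp only [Matrix.mul_apply, Matrix.transpose_apply, phiM, Matrix.of_apply]
  rw [sum_ind' (memE hE i) (fun b => kerMatOn k A a b)]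
  rfl

lemma phiMul (hE : ∀ z ∈ E, z ∈ A) :
    phiM A E * kerMatOn k A
      = Matrix.of (fun (i : Fin E.length) (a : {x // x ∈ A}) => k (E.get i) a.1) := by
  ext i a
  simp only [Matrix.mul_apply, phiM, Matrix.of_apply]
  rw [sum_ind (memE hE i) (fun b => kerMatOn k A b a)]
  rfl

lemma targetCov_eq (hE : ∀ z ∈ E, z ∈ A) :
    targetCov k ρ2 A E = kerMatOn k A -
      kerMatOn k A * (phiM A E)ᵀ * (kerMat k E + noiseMat ρ2 E)⁻¹
        * (phiM A E * kerMatOn k A) := by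
  rw [mulPhiT hE, phiMul hE]
  ext a b
  simp only [targetCov, postCov, Matrix.of_apply, Matrix.sub_apply, Matrix.mul_apply,
    kerMatOn]
  congr 1
  rw [Finset.sum_comm]
  simp_rw [Finset.sum_mul]

lemma noiseMat_inv (hρ : ∀ x, 0 < ρ2 x) :
    (noiseMat ρ2 E)⁻¹ = Matrix.diagonal (fun i : Fin E.length => (ρ2 (E.get i))⁻¹) := by
  refine Matrix.inv_eq_right_inv ?_
  rw [show noiseMat ρ2 E = Matrix.diagonal (fun i : Fin E.length => ρ2 (E.get i)) from rfl,
    Matrix.diagonal_mul_diagonal]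
  rw [show (fun i : Fin E.length => ρ2 (E.get i) * (ρ2 (E.get i))⁻¹) = fun _ => (1:ℝ) by
    funext i
    exact mul_inv_cancel₀ (hρ _).ne']
  exact Matrix.diagonal_one

lemma phiP_eq (hρ : ∀ x, 0 < ρ2 x) :
    (phiM A E)ᵀ * (noiseMat ρ2 E)⁻¹ * phiM A E = nAmat ρ2 A E := by
  have hD : (phiM A E)ᵀ * (noiseMat ρ2 E)⁻¹
      = Matrix.of fun (a : {x // x ∈ A}) (j : Fin E.length) =>
          (if ((a:ι) = E.get j) then (1:ℝ) else 0) * (ρ2 (E.get j))⁻¹ := by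
    rw [noiseMat_inv hρ]
    ext a j
    simp [Matrix.mul_diagonal, phiM]
  rw [hD]
  ext a b
  simp only [Matrix.mul_apply, Matrix.of_apply, phiM, nAmat]
  by_cases hab : a = b
  · subst hab
    rw [Matrix.diagonal_apply_eq]
    have step : ∀ j : Fin E.length,
        (if (a : ι) = E.get j then (1:ℝ) else 0) * (ρ2 (E.get j))⁻¹
          * (if (a : ι) = E.get j then (1:ℝ) else 0)
        = (if (a : ι) = E.get j then (1:ℝ) else 0) * (ρ2 a.1)⁻¹ := by
      intro j
      by_cases h : (a : ι) = E.get j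
      · simp only [if_pos h]
        rw [← h]
        ring
      · simp only [if_neg h]
        ring
    calc ∑ j : Fin E.length, (if (a : ι) = E.get j then (1:ℝ) else 0) * (ρ2 (E.get j))⁻¹
          * (if (a : ι) = E.get j then (1:ℝ) else 0)
        = ∑ j : Fin E.length, (if (a : ι) = E.get j then (1:ℝ) else 0) * (ρ2 a.1)⁻¹ :=
          Finset.sum_congr rfl fun j _ => step j
      _ = (∑ j : Fin E.length, if (a : ι) = E.get j then (1:ℝ) else 0) * (ρ2 a.1)⁻¹ :=
          (Finset.sum_mul _ _ _).symm
      _ = (E.count a.1 : ℝ) / ρ2 a.1 := by rw [count_fin_sum]; ring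
  · rw [Matrix.diagonal_apply_ne _ hab]
    refine Finset.sum_eq_zero fun j _ => ?_
    by_cases h : (a : ι) = E.get j
    · have h2 : ¬ (b : ι) = E.get j := fun h2 => hab (Subtype.ext (h.trans h2.symm))
      rw [if_neg h2]; ring
    · rw [if_neg h]; ring

lemma posDef_add_posSemidef {n : Type*} [Fintype n] {P Q : Matrix n n ℝ}
    (hP : P.PosDef) (hQ : Q.PosSemidef) : (P + Q).PosDef := by
  exact hP.add_posSemidef hQ

lemma det_add_smul_col_row {n : Type*} [Fintype n] [DecidableEq n] {P : Matrix n n ℝ}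
    (hP : IsUnit P.det) (t : ℝ) (u : n → ℝ) :
    (P + t • (Matrix.replicateCol Unit u * Matrix.replicateRow Unit u)).det
      = P.det * (1 + t * (u ⬝ᵥ P⁻¹ *ᵥ u)) := by
  have h1 : t • (Matrix.replicateCol Unit u * Matrix.replicateRow Unit u)
      = Matrix.replicateCol Unit (t • u) * Matrix.replicateRow Unit u := by
    rw [← Matrix.smul_mul, Matrix.replicateCol_smul]
  rw [h1, Matrix.det_add_replicateCol_mul_replicateRow hP]
  congr 1
  rw [Matrix.det_unique]
  simp only [Matrix.mul_apply, Matrix.replicateRow_apply, Matrix.replicateCol_apply, Pi.add_apply,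
    Matrix.add_apply, Matrix.one_apply_eq, Pi.smul_apply, smul_eq_mul, dotProduct,
    Matrix.mulVec, Finset.mul_sum, Finset.sum_mul]
  congr 1
  rw [Finset.sum_comm]
  refine Finset.sum_congr rfl fun j _ => ?_
  refine Finset.sum_congr rfl fun i _ => ?_
  ring

lemma dot_inv_antitone {n : Type*} [Fintype n] [DecidableEq n] {P Q : Matrix n n ℝ}
    (hP : P.PosDef) (hQ : Q.PosDef) (hPQ : (Q - P).PosSemidef) (u : n → ℝ) :
    u ⬝ᵥ Q⁻¹ *ᵥ u ≤ u ⬝ᵥ P⁻¹ *ᵥ u := by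
  set v := Q⁻¹ *ᵥ u with hv
  set w := P⁻¹ *ᵥ u with hw
  have hQu : IsUnit Q.det := isUnit_iff_ne_zero.mpr hQ.det_pos.ne'
  have hPu : IsUnit P.det := isUnit_iff_ne_zero.mpr hP.det_pos.ne'
  have hQv : Q *ᵥ v = u := by
    rw [hv, Matrix.mulVec_mulVec, Matrix.mul_nonsing_inv _ hQu, Matrix.one_mulVec]
  have hPw : P *ᵥ w = u := by
    rw [hw, Matrix.mulVec_mulVec, Matrix.mul_nonsing_inv _ hPu, Matrix.one_mulVec]
  have hsym : ∀ a b : n → ℝ, a ⬝ᵥ P *ᵥ b = (P *ᵥ a) ⬝ᵥ b := by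
    intro a b
    rw [Matrix.dotProduct_mulVec, ← Matrix.mulVec_transpose]
    congr 1
    rw [show Pᵀ = P from hP.1]
  have h1 : (0:ℝ) ≤ (v - w) ⬝ᵥ P *ᵥ (v - w) := by
    have := hP.posSemidef.dotProduct_mulVec_nonneg (v - w)
    simpa using this
  have h2 : (0:ℝ) ≤ v ⬝ᵥ (Q - P) *ᵥ v := by
    have := hPQ.dotProduct_mulVec_nonneg v
    simpa using this
  have e1 : (v - w) ⬝ᵥ P *ᵥ (v - w) = v ⬝ᵥ P *ᵥ v - 2 * (v ⬝ᵥ u) + w ⬝ᵥ u := by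
    rw [Matrix.mulVec_sub, dotProduct_sub, sub_dotProduct, sub_dotProduct, hPw]
    have e2 : w ⬝ᵥ P *ᵥ v = v ⬝ᵥ u := by
      rw [hsym, hPw, dotProduct_comm]
    rw [e2]
    ring
  have e3 : v ⬝ᵥ (Q - P) *ᵥ v = v ⬝ᵥ u - v ⬝ᵥ P *ᵥ v := by
    rw [Matrix.sub_mulVec, dotProduct_sub, hQv]
  have goal' : v ⬝ᵥ u ≤ w ⬝ᵥ u := by
    rw [e1] at h1; rw [e3] at h2; linarith
  calc u ⬝ᵥ v = v ⬝ᵥ u := dotProduct_comm _ _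
    _ ≤ w ⬝ᵥ u := goal'
    _ = u ⬝ᵥ w := dotProduct_comm _ _

lemma noiseMat_posDef (hρ : ∀ x, 0 < ρ2 x) : (noiseMat ρ2 E).PosDef :=
  Matrix.posDef_diagonal_iff.mpr fun i => hρ _

lemma targetCov_inv (hρ : ∀ x, 0 < ρ2 x) (hK : (kerMatOn k A).PosDef)
    (hE : ∀ z ∈ E, z ∈ A) :
    targetCov k ρ2 A E = ((kerMatOn k A)⁻¹ + nAmat ρ2 A E)⁻¹ := by
  have hKdet : IsUnit (kerMatOn k A).det := isUnit_iff_ne_zero.mpr hK.det_pos.ne'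
  have hPpd : (noiseMat ρ2 E).PosDef := noiseMat_posDef hρ
  have hPdet : IsUnit (noiseMat ρ2 E).det := isUnit_iff_ne_zero.mpr hPpd.det_pos.ne'
  have hkerPSD : (phiM A E * kerMatOn k A * (phiM A E)ᵀ).PosSemidef := by
    have := hK.posSemidef.mul_mul_conjTranspose_same (phiM A E)
    rwa [Matrix.conjTranspose_eq_transpose_of_trivial] at this
  have hW : (noiseMat ρ2 E + phiM A E * kerMatOn k A * (phiM A E)ᵀ).PosDef :=
    posDef_add_posSemidef hPpd hkerPSD
  have hAC : IsUnit (((noiseMat ρ2 E)⁻¹)⁻¹ + phiM A E * ((kerMatOn k A)⁻¹)⁻¹ * (phiM A E)ᵀ) := by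
    rw [Matrix.nonsing_inv_nonsing_inv _ hKdet, Matrix.nonsing_inv_nonsing_inv _ hPdet]
    exact hW.isUnit
  have wood := Matrix.add_mul_mul_inv_eq_sub (A := (kerMatOn k A)⁻¹) (U := (phiM A E)ᵀ)
    (C := (noiseMat ρ2 E)⁻¹) (V := phiM A E) hK.inv.isUnit hPpd.inv.isUnit hAC
  rw [Matrix.nonsing_inv_nonsing_inv _ hKdet, Matrix.nonsing_inv_nonsing_inv _ hPdet] at wood
  rw [phiP_eq hρ] at wood
  rw [wood, targetCov_eq hE, kerMat_eq hE]
  rw [add_comm (phiM A E * kerMatOn k A * (phiM A E)ᵀ) (noiseMat ρ2 E)]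
  rw [Matrix.mul_assoc (kerMatOn k A * (phiM A E)ᵀ *
    (noiseMat ρ2 E + phiM A E * kerMatOn k A * (phiM A E)ᵀ)⁻¹) (phiM A E) (kerMatOn k A)]

/-- log det of the precision-form matrix -/
noncomputable def ggk (k : Matrix ι ι ℝ) (ρ2 : ι → ℝ) (A : Finset ι) (E : List ι) : ℝ :=
  Real.log ((kerMatOn k A)⁻¹ + nAmat ρ2 A E).det

lemma precision_posDef (hρ : ∀ x, 0 < ρ2 x) (hK : (kerMatOn k A).PosDef) :
    ((kerMatOn k A)⁻¹ + nAmat ρ2 A E).PosDef :=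
  posDef_add_posSemidef hK.inv (nAmat_posSemidef hρ A E)

lemma log_det_targetCov (hρ : ∀ x, 0 < ρ2 x) (hK : (kerMatOn k A).PosDef)
    (hE : ∀ z ∈ E, z ∈ A) :
    Real.log (targetCov k ρ2 A E).det = - ggk k ρ2 A E := by
  rw [targetCov_inv hρ hK hE, Matrix.det_nonsing_inv, Ring.inverse_eq_inv, Real.log_inv, ggk]

lemma ggk_congr {E E' : List ι} (h : nAmat ρ2 A E = nAmat ρ2 A E') :
    ggk k ρ2 A E = ggk k ρ2 A E' := by
  rw [ggk, ggk, h]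

lemma ggk_step (hρ : ∀ x, 0 < ρ2 x) (hK : (kerMatOn k A).PosDef) {x : ι} (hx : x ∈ A) :
    ggk k ρ2 A (E ++ [x]) = ggk k ρ2 A E
      + Real.log (1 + (ρ2 x)⁻¹ *
          (indA A x ⬝ᵥ ((kerMatOn k A)⁻¹ + nAmat ρ2 A E)⁻¹ *ᵥ indA A x)) := by
  have hP : ((kerMatOn k A)⁻¹ + nAmat ρ2 A E).PosDef := precision_posDef hρ hK
  have hPu : IsUnit ((kerMatOn k A)⁻¹ + nAmat ρ2 A E).det :=
    isUnit_iff_ne_zero.mpr hP.det_pos.ne'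
  have hq : 0 ≤ indA A x ⬝ᵥ ((kerMatOn k A)⁻¹ + nAmat ρ2 A E)⁻¹ *ᵥ indA A x := by
    simpa using hP.inv.posSemidef.dotProduct_mulVec_nonneg (indA A x)
  have hfac : (0:ℝ) < 1 + (ρ2 x)⁻¹ *
      (indA A x ⬝ᵥ ((kerMatOn k A)⁻¹ + nAmat ρ2 A E)⁻¹ *ᵥ indA A x) := by
    have := mul_nonneg (inv_nonneg.mpr (hρ x).le) hq
    linarith
  rw [ggk, ggk, nAmat_append, nAmat_single, ← add_assoc]
  rw [det_add_smul_col_row hPu]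
  rw [Real.log_mul hP.det_pos.ne' hfac.ne']

lemma ggk_step_nonneg (hρ : ∀ x, 0 < ρ2 x) (hK : (kerMatOn k A).PosDef) {x : ι}
    (hx : x ∈ A) : ggk k ρ2 A E ≤ ggk k ρ2 A (E ++ [x]) := by
  rw [ggk_step hρ hK hx]
  have hP : ((kerMatOn k A)⁻¹ + nAmat ρ2 A E).PosDef := precision_posDef hρ hK
  have hq : 0 ≤ indA A x ⬝ᵥ ((kerMatOn k A)⁻¹ + nAmat ρ2 A E)⁻¹ *ᵥ indA A x := by
    simpa using hP.inv.posSemidef.dotProduct_mulVec_nonneg (indA A x)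
  have h1 : 0 ≤ Real.log (1 + (ρ2 x)⁻¹ *
      (indA A x ⬝ᵥ ((kerMatOn k A)⁻¹ + nAmat ρ2 A E)⁻¹ *ᵥ indA A x)) := by
    apply Real.log_nonneg
    nlinarith [inv_nonneg.mpr (hρ x).le]
  linarith

lemma ggk_le_append (hρ : ∀ x, 0 < ρ2 x) (hK : (kerMatOn k A).PosDef) :
    ∀ (G E : List ι), (∀ z ∈ G, z ∈ A) → ggk k ρ2 A E ≤ ggk k ρ2 A (E ++ G) := by
  intro G
  induction G with
  | nil => intro E _; simp
  | cons g G ih =>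
    intro E hG
    have h1 : ggk k ρ2 A E ≤ ggk k ρ2 A (E ++ [g]) :=
      ggk_step_nonneg hρ hK (hG g (List.mem_cons_self))
    have h2 := ih (E ++ [g]) (fun z hz => hG z (List.mem_cons_of_mem g hz))
    rw [List.append_cons]
    exact h1.trans h2

/-- the core submodularity inequality at the level of the step factors -/
lemma ggk_gain_mono (hρ : ∀ x, 0 < ρ2 x) (hK : (kerMatOn k A).PosDef)
    {E E' : List ι} (hcnt : ∀ a : {y // y ∈ A}, E.count a.1 ≤ E'.count a.1)
    {x : ι} (hx : x ∈ A) :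
    ggk k ρ2 A (E' ++ [x]) - ggk k ρ2 A E' ≤ ggk k ρ2 A (E ++ [x]) - ggk k ρ2 A E := by
  have hP : ((kerMatOn k A)⁻¹ + nAmat ρ2 A E).PosDef := precision_posDef hρ hK
  have hP' : ((kerMatOn k A)⁻¹ + nAmat ρ2 A E').PosDef := precision_posDef hρ hK
  have hdiff : (((kerMatOn k A)⁻¹ + nAmat ρ2 A E') - ((kerMatOn k A)⁻¹ + nAmat ρ2 A E)).PosSemidef := by
    have : ((kerMatOn k A)⁻¹ + nAmat ρ2 A E') - ((kerMatOn k A)⁻¹ + nAmat ρ2 A E)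
        = Matrix.diagonal (fun a : {y // y ∈ A} =>
            (E'.count a.1 : ℝ) / ρ2 a.1 - (E.count a.1 : ℝ) / ρ2 a.1) := by
      rw [add_sub_add_left_eq_sub, nAmat, nAmat, Matrix.diagonal_sub]
    rw [this]
    refine Matrix.PosSemidef.diagonal fun a => ?_
    have h1 : (E.count a.1 : ℝ) ≤ (E'.count a.1 : ℝ) := Nat.cast_le.mpr (hcnt a)
    have := hρ a.1
    apply sub_nonneg.mpr
    exact div_le_div_of_nonneg_right h1 this.le
  have key := dot_inv_antitone hP hP' hdiff (indA A x)
  rw [ggk_step hρ hK hx, ggk_step hρ hK hx]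
  have hq' : 0 ≤ indA A x ⬝ᵥ ((kerMatOn k A)⁻¹ + nAmat ρ2 A E')⁻¹ *ᵥ indA A x := by
    simpa using hP'.inv.posSemidef.dotProduct_mulVec_nonneg (indA A x)
  have hlog := Real.log_le_log (by nlinarith [inv_nonneg.mpr (hρ x).le])
    (show (1:ℝ) + (ρ2 x)⁻¹ * (indA A x ⬝ᵥ ((kerMatOn k A)⁻¹ + nAmat ρ2 A E')⁻¹ *ᵥ indA A x)
      ≤ 1 + (ρ2 x)⁻¹ * (indA A x ⬝ᵥ ((kerMatOn k A)⁻¹ + nAmat ρ2 A E)⁻¹ *ᵥ indA A x) by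
        nlinarith [inv_nonneg.mpr (hρ x).le])
  linarith

lemma part2_abstract (F : List ι → ℝ) (S : Finset ι)
    (h1 : ∀ B' B : List ι, (∀ z ∈ B, z ∈ S) → B'.Subperm B → ∀ x ∈ S,
      F (B ++ [x]) - F B ≤ F (B' ++ [x]) - F B') :
    ∀ X B : List ι, (∀ z ∈ B, z ∈ S) → (∀ z ∈ X, z ∈ S) →
      F (B ++ X) - F B ≤ ∑ i : Fin X.length, (F (B ++ [X.get i]) - F B) := by
  intro X
  induction X with
  | nil => intro B _ _; simp
  | cons x X ih =>
    intro B hB hX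
    have hxS : x ∈ S := hX x (List.mem_cons_self)
    have hXS : ∀ z ∈ X, z ∈ S := fun z hz => hX z (List.mem_cons_of_mem x hz)
    have hBx : ∀ z ∈ B ++ [x], z ∈ S := by
      intro z hz
      rcases List.mem_append.mp hz with h | h
      · exact hB z h
      · rw [List.mem_singleton] at h; subst h; exact hxS
    have ih' := ih (B ++ [x]) hBx hXS
    have hterm : ∀ i : Fin X.length,
        F ((B ++ [x]) ++ [X.get i]) - F (B ++ [x]) ≤ F (B ++ [X.get i]) - F B :=
      fun i => h1 B (B ++ [x]) hBx (List.sublist_append_left B [x]).subperm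
        (X.get i) (hXS _ (X.get_mem i))
    have hsum : ∑ i : Fin X.length, (F ((B ++ [x]) ++ [X.get i]) - F (B ++ [x]))
        ≤ ∑ i : Fin X.length, (F (B ++ [X.get i]) - F B) :=
      Finset.sum_le_sum fun i _ => hterm i
    have hlen : (x :: X).length = X.length + 1 := rfl
    rw [List.append_cons]
    have hrw : ∑ i : Fin (x :: X).length, (F (B ++ [(x :: X).get i]) - F B)
        = (F (B ++ [x]) - F B) + ∑ i : Fin X.length, (F (B ++ [X.get i]) - F B) := by
      simp only [List.length_cons]
      rw [Fin.sum_univ_succ]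
      simp only [List.get_cons_zero,
        show ∀ i : Fin X.length, (x :: X).get i.succ = X.get i from fun i => rfl]
    rw [hrw]
    linarith

lemma greedy_abstract (F : List ι → ℝ) (S : Finset ι)
    (h0 : F [] = 0)
    (h2 : ∀ G B : List ι, (∀ z ∈ G, z ∈ S) → (∀ z ∈ B, z ∈ S) → F B ≤ F (G ++ B))
    (hpart2 : ∀ B X : List ι, (∀ z ∈ B, z ∈ S) → (∀ z ∈ X, z ∈ S) →
      F (B ++ X) - F B ≤ ∑ i : Fin X.length, (F (B ++ [X.get i]) - F B))
    (xs : ℕ → ι) (hxs1 : ∀ i, xs i ∈ S)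
    (hg : ∀ i, ∀ x ∈ S, F (obsList xs i ++ [x]) ≤ F (obsList xs i ++ [xs i]))
    (b : ℕ) :
    (1 - Real.exp (-1)) * sSup {v : ℝ | ∃ B : List ι, B.length = b ∧ (∀ z ∈ B, z ∈ S) ∧ v = F B}
      ≤ F (obsList xs b) := by
  have hobsmem : ∀ n, ∀ z ∈ obsList xs n, z ∈ S := by
    intro n z hz
    rw [obsList, List.mem_map] at hz
    obtain ⟨i, _, rfl⟩ := hz
    exact hxs1 i
  have hsucc : ∀ n, obsList xs (n+1) = obsList xs n ++ [xs n] := by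
    intro n; rw [obsList, obsList, List.range_succ, List.map_append]; rfl
  have hFnonneg : ∀ B, (∀ z ∈ B, z ∈ S) → 0 ≤ F B := by
    intro B hB
    have := h2 B [] hB (by simp)
    rwa [List.append_nil, h0] at this
  have hepos : (0:ℝ) < 1 - Real.exp (-1) := by
    have h1 : Real.exp (-1) < 1 := by
      have := Real.exp_lt_one_iff.mpr (show (-1:ℝ) < 0 by norm_num)
      exact this
    linarith
  have hcnn : 0 ≤ F (obsList xs b) := hFnonneg _ (hobsmem b)
  have key : ∀ v ∈ {v : ℝ | ∃ B : List ι, B.length = b ∧ (∀ z ∈ B, z ∈ S) ∧ v = F B},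
      (1 - Real.exp (-1)) * v ≤ F (obsList xs b) := by
    rintro v ⟨Bs, hlen, hBS, rfl⟩
    rcases Nat.eq_zero_or_pos b with hb0 | hbpos
    · subst hb0
      have hBs : Bs = [] := List.length_eq_zero_iff.mp hlen
      subst hBs
      rw [h0, mul_zero]
      exact hcnn
    · have hb0 : (0:ℝ) < (b:ℝ) := by exact_mod_cast hbpos
      have hbR : (1:ℝ) ≤ (b:ℝ) := by exact_mod_cast hbpos
      have h1b : (0:ℝ) ≤ 1 - 1/(b:ℝ) := by
        rw [sub_nonneg, div_le_one hb0]
        exact hbR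
      have hvnn : 0 ≤ F Bs := hFnonneg Bs hBS
      have step : ∀ i, F Bs - F (obsList xs i)
          ≤ (b:ℝ) * (F (obsList xs (i+1)) - F (obsList xs i)) := by
        intro i
        have hh2 : F Bs ≤ F (obsList xs i ++ Bs) := h2 _ _ (hobsmem i) hBS
        have hp2 := hpart2 (obsList xs i) Bs (hobsmem i) hBS
        have hterm : ∀ j : Fin Bs.length,
            F (obsList xs i ++ [Bs.get j]) - F (obsList xs i)
              ≤ F (obsList xs (i+1)) - F (obsList xs i) := by
          intro j
          have := hg i (Bs.get j) (hBS _ (Bs.get_mem j))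
          rw [hsucc i]
          linarith
        have hsum : ∑ j : Fin Bs.length,
            (F (obsList xs i ++ [Bs.get j]) - F (obsList xs i))
            ≤ (b:ℝ) * (F (obsList xs (i+1)) - F (obsList xs i)) := by
          calc ∑ j : Fin Bs.length, (F (obsList xs i ++ [Bs.get j]) - F (obsList xs i))
              ≤ ∑ _j : Fin Bs.length, (F (obsList xs (i+1)) - F (obsList xs i)) :=
                Finset.sum_le_sum fun j _ => hterm j
            _ = (b:ℝ) * (F (obsList xs (i+1)) - F (obsList xs i)) := by
                rw [Finset.sum_const, Finset.card_univ, Fintype.card_fin, hlen, nsmul_eq_mul]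
        linarith
      have decay : ∀ i, F Bs - F (obsList xs i) ≤ (1 - 1/(b:ℝ))^i * F Bs := by
        intro i
        induction i with
        | zero =>
          have h00 : obsList xs 0 = [] := by simp [obsList]
          rw [h00, h0, pow_zero, one_mul, sub_zero]
        | succ i ih =>
          have hstep := step i
          have hdiv : (F Bs - F (obsList xs i)) / (b:ℝ)
              ≤ F (obsList xs (i+1)) - F (obsList xs i) := by
            rw [div_le_iff₀ hb0]
            linarith [hstep]
          have expand : (1 - 1/(b:ℝ)) * (F Bs - F (obsList xs i))
              = (F Bs - F (obsList xs i)) - (F Bs - F (obsList xs i))/(b:ℝ) := by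
            field_simp
          have key2 : F Bs - F (obsList xs (i+1))
              ≤ (1 - 1/(b:ℝ)) * (F Bs - F (obsList xs i)) := by
            rw [expand]
            linarith
          calc F Bs - F (obsList xs (i+1))
              ≤ (1 - 1/(b:ℝ)) * (F Bs - F (obsList xs i)) := key2
            _ ≤ (1 - 1/(b:ℝ)) * ((1 - 1/(b:ℝ))^i * F Bs) :=
                mul_le_mul_of_nonneg_left ih h1b
            _ = (1 - 1/(b:ℝ))^(i+1) * F Bs := by ring
      have hpow : (1 - 1/(b:ℝ))^b ≤ Real.exp (-1) := by
        have h1 : 1 - 1/(b:ℝ) ≤ Real.exp (-(1/(b:ℝ))) := by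
          have := Real.add_one_le_exp (-(1/(b:ℝ)))
          linarith
        calc (1 - 1/(b:ℝ))^b ≤ (Real.exp (-(1/(b:ℝ))))^b := pow_le_pow_left₀ h1b h1 b
          _ = Real.exp ((b:ℝ) * (-(1/(b:ℝ)))) := by rw [← Real.exp_nat_mul]
          _ = Real.exp (-1) := by
              congr 1
              field_simp
      have hfinal := decay b
      have hmul : (1 - 1/(b:ℝ))^b * F Bs ≤ Real.exp (-1) * F Bs :=
        mul_le_mul_of_nonneg_right hpow hvnn
      nlinarith
  have hsup : sSup {v : ℝ | ∃ B : List ι, B.length = b ∧ (∀ z ∈ B, z ∈ S) ∧ v = F B}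
      ≤ F (obsList xs b) / (1 - Real.exp (-1)) := by
    refine Real.sSup_le (fun v hv => ?_) (div_nonneg hcnn hepos.le)
    rw [le_div_iff₀ hepos]
    rw [mul_comm]
    exact key v hv
  calc (1 - Real.exp (-1)) * sSup {v : ℝ | ∃ B : List ι, B.length = b ∧ (∀ z ∈ B, z ∈ S) ∧ v = F B}
      ≤ (1 - Real.exp (-1)) * (F (obsList xs b) / (1 - Real.exp (-1))) :=
        mul_le_mul_of_nonneg_left hsup hepos.le
    _ = F (obsList xs b) := by
        rw [mul_comm, div_mul_cancel₀ _ hepos.ne']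

lemma memapp {A : Finset ι} {L M : List ι} (hL : ∀ z ∈ L, z ∈ A) (hM : ∀ z ∈ M, z ∈ A) :
    ∀ z ∈ L ++ M, z ∈ A := fun z hz => (List.mem_append.mp hz).elim (hL z) (hM z)

lemma memsingle {A : Finset ι} {x : ι} (hx : x ∈ A) : ∀ z ∈ [x], z ∈ A := by
  intro z hz; rw [List.mem_singleton] at hz; subst hz; exact hx

lemma iGain_eq {D B : List ι} (hρ : ∀ x, 0 < ρ2 x) (hK : (kerMatOn k A).PosDef)
    (hDA : ∀ z ∈ D, z ∈ A) (hBA : ∀ z ∈ B, z ∈ A) :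
    iGain k ρ2 A D B = (1/2) * (ggk k ρ2 A (D ++ B) - ggk k ρ2 A D) := by
  rw [iGain, log_det_targetCov hρ hK hDA, log_det_targetCov hρ hK (memapp hDA hBA)]
  ring

lemma targetCov_det_zero (hdet : (kerMatOn k A).det = 0) (hE : ∀ z ∈ E, z ∈ A) :
    (targetCov k ρ2 A E).det = 0 := by
  obtain ⟨v, hv0, hKv⟩ := (Matrix.exists_mulVec_eq_zero_iff).mpr hdet
  apply (Matrix.exists_mulVec_eq_zero_iff).mp
  refine ⟨v, hv0, ?_⟩
  rw [targetCov_eq hE, Matrix.sub_mulVec, hKv]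
  rw [show kerMatOn k A * (phiM A E)ᵀ * (kerMat k E + noiseMat ρ2 E)⁻¹ * (phiM A E * kerMatOn k A)
      = kerMatOn k A * (phiM A E)ᵀ * (kerMat k E + noiseMat ρ2 E)⁻¹ * phiM A E * kerMatOn k A
    from by rw [Matrix.mul_assoc (kerMatOn k A * (phiM A E)ᵀ * (kerMat k E + noiseMat ρ2 E)⁻¹)
      (phiM A E) (kerMatOn k A)]]
  rw [← Matrix.mulVec_mulVec, hKv, Matrix.mulVec_zero, sub_zero]

lemma iGain_zero_deg {D B : List ι} (hdet : (kerMatOn k A).det = 0)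
    (hDA : ∀ z ∈ D, z ∈ A) (hBA : ∀ z ∈ B, z ∈ A) :
    iGain k ρ2 A D B = 0 := by
  rw [iGain, targetCov_det_zero hdet hDA, targetCov_det_zero hdet (memapp hDA hBA),
    Real.log_zero, sub_self, mul_zero]

lemma h1_pd {D : List ι} {S : Finset ι} (hρ : ∀ x, 0 < ρ2 x) (hK : (kerMatOn k A).PosDef)
    (hSA : S ⊆ A) (hDA : ∀ z ∈ D, z ∈ A) :
    ∀ B' B : List ι, (∀ z ∈ B, z ∈ S) → B'.Subperm B → ∀ x ∈ S,
      iGain k ρ2 A D (B ++ [x]) - iGain k ρ2 A D B ≤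
        iGain k ρ2 A D (B' ++ [x]) - iGain k ρ2 A D B' := by
  intro B' B hB hsub x hx
  have hB' : ∀ z ∈ B', z ∈ S := fun z hz => hB z (hsub.subset hz)
  have hBA : ∀ z ∈ B, z ∈ A := fun z hz => hSA (hB z hz)
  have hB'A : ∀ z ∈ B', z ∈ A := fun z hz => hSA (hB' z hz)
  have hxA : x ∈ A := hSA hx
  rw [iGain_eq hρ hK hDA (memapp hBA (memsingle hxA)), iGain_eq hρ hK hDA hBA,
      iGain_eq hρ hK hDA (memapp hB'A (memsingle hxA)), iGain_eq hρ hK hDA hB'A]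
  have hmono := ggk_gain_mono (E := D ++ B') (E' := D ++ B) hρ hK (fun a => by
    rw [List.count_append, List.count_append]
    exact Nat.add_le_add_left (hsub.count_le a.1) _) hxA
  rw [← List.append_assoc, ← List.append_assoc]
  linarith [hmono]

lemma h2_pd {D : List ι} {S : Finset ι} (hρ : ∀ x, 0 < ρ2 x) (hK : (kerMatOn k A).PosDef)
    (hSA : S ⊆ A) (hDA : ∀ z ∈ D, z ∈ A) :
    ∀ G B : List ι, (∀ z ∈ G, z ∈ S) → (∀ z ∈ B, z ∈ S) →
      iGain k ρ2 A D B ≤ iGain k ρ2 A D (G ++ B) := by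
  intro G B hG hB
  have hGA : ∀ z ∈ G, z ∈ A := fun z hz => hSA (hG z hz)
  have hBA : ∀ z ∈ B, z ∈ A := fun z hz => hSA (hB z hz)
  rw [iGain_eq hρ hK hDA hBA, iGain_eq hρ hK hDA (memapp hGA hBA)]
  have e : ggk k ρ2 A (D ++ (G ++ B)) = ggk k ρ2 A ((D ++ B) ++ G) := by
    apply ggk_congr
    rw [nAmat_append, nAmat_append, nAmat_append, nAmat_append]
    abel
  have hle := ggk_le_append hρ hK G (D ++ B) hGA
  rw [e]
  linarith

lemma posDef_of_psd_det_ne_zero {n : Type*} [Fintype n] [DecidableEq n]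
    {M : Matrix n n ℝ} (hM : M.PosSemidef) (h : M.det ≠ 0) : M.PosDef := by
  refine .of_dotProduct_mulVec_pos hM.1 fun x hx => ?_
  rcases lt_or_eq_of_le (hM.dotProduct_mulVec_nonneg x) with hlt | heq
  · exact hlt
  · exfalso
    have h0 : M *ᵥ x = 0 := (hM.dotProduct_mulVec_zero_iff x).mp heq.symm
    exact h ((Matrix.exists_mulVec_eq_zero_iff).mp ⟨x, hx, h0⟩)

lemma iGain_nil {k : Matrix ι ι ℝ} {ρ2 : ι → ℝ} {A : Finset ι} {D : List ι} [DecidableEq ι] :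
    iGain k ρ2 A D [] = 0 := by
  rw [iGain, List.append_nil, sub_self, mul_zero]

end Aux

/-- submodularity of the batch-selection objective when `S ⊆ A`: the set
function `F(B) = I(f_A; y_B ∣ D)` on multisets `B ⊆ S` is submodular; consequently its
submodularity ratio is at least `1` (i.e. `Δ(X ∣ B) ≤ Σ_{x ∈ X} Δ(x ∣ B)`), and any
greedy batch is a `(1 − 1/e)`-approximation of the optimal batch of the same size. -/
theorem batch_objective_submodular [Fintype ι] [DecidableEq ι]
    (k : Matrix ι ι ℝ) (ρ2 : ι → ℝ)
    (hk : k.PosSemidef) (hρ : ∀ x, 0 < ρ2 x)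
    (A S : Finset ι) (hSA : S ⊆ A)
    (D : List ι) (hD : ∀ z ∈ D, z ∈ S) :
    -- submodularity: diminishing marginal gains
    (∀ B' B : List ι, (∀ z ∈ B, z ∈ S) → B'.Subperm B → ∀ x ∈ S,
      iGain k ρ2 A D (B ++ [x]) - iGain k ρ2 A D B ≤
        iGain k ρ2 A D (B' ++ [x]) - iGain k ρ2 A D B') ∧
    -- the submodularity ratio is at least 1
    (∀ B X : List ι, (∀ z ∈ B, z ∈ S) → (∀ z ∈ X, z ∈ S) →
      iGain k ρ2 A D (B ++ X) - iGain k ρ2 A D B ≤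
        ∑ i : Fin X.length, (iGain k ρ2 A D (B ++ [X.get i]) - iGain k ρ2 A D B)) ∧
    -- greedy batches are (1 - 1/e)-approximations of optimal batches
    (∀ xs : ℕ → ι,
      (∀ i : ℕ, xs i ∈ S ∧ ∀ x ∈ S,
        iGain k ρ2 A D (obsList xs i ++ [x]) ≤
          iGain k ρ2 A D (obsList xs i ++ [xs i])) →
      ∀ b : ℕ,
        (1 - Real.exp (-1)) *
            sSup { v : ℝ | ∃ B : List ι, B.length = b ∧ (∀ z ∈ B, z ∈ S) ∧
              v = iGain k ρ2 A D B } ≤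
          iGain k ρ2 A D (obsList xs b)) := by
  have hDA : ∀ z ∈ D, z ∈ A := fun z hz => hSA (hD z hz)
  have hkOn : (kerMatOn k A).PosSemidef := hk.submatrix (fun (i : {x // x ∈ A}) => (i : ι))
  by_cases hdet : (kerMatOn k A).det = 0
  · -- degenerate kernel: all information gains vanish
    have hzero : ∀ B : List ι, (∀ z ∈ B, z ∈ S) → iGain k ρ2 A D B = 0 := fun B hB =>
      iGain_zero_deg hdet hDA (fun z hz => hSA (hB z hz))
    have h1 : ∀ B' B : List ι, (∀ z ∈ B, z ∈ S) → B'.Subperm B → ∀ x ∈ S,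
        iGain k ρ2 A D (B ++ [x]) - iGain k ρ2 A D B ≤
          iGain k ρ2 A D (B' ++ [x]) - iGain k ρ2 A D B' := by
      intro B' B hB hsub x hx
      have hB' : ∀ z ∈ B', z ∈ S := fun z hz => hB z (hsub.subset hz)
      rw [hzero _ (memapp hB (memsingle hx)), hzero _ hB,
        hzero _ (memapp hB' (memsingle hx)), hzero _ hB']
    have h2 : ∀ G B : List ι, (∀ z ∈ G, z ∈ S) → (∀ z ∈ B, z ∈ S) →
        iGain k ρ2 A D B ≤ iGain k ρ2 A D (G ++ B) := by
      intro G B hG hB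
      rw [hzero _ hB, hzero _ (memapp hG hB)]
    refine ⟨h1, fun B X hB hX => part2_abstract (iGain k ρ2 A D) S h1 X B hB hX,
      fun xs hxs b => greedy_abstract (iGain k ρ2 A D) S iGain_nil h2
        (fun B X hB hX => part2_abstract (iGain k ρ2 A D) S h1 X B hB hX)
        xs (fun i => (hxs i).1) (fun i x hx => (hxs i).2 x hx) b⟩
  · have hK : (kerMatOn k A).PosDef := posDef_of_psd_det_ne_zero hkOn hdet
    have h1 := h1_pd hρ hK hSA hDA
    have h2 := h2_pd hρ hK hSA hDA
    refine ⟨h1, fun B X hB hX => part2_abstract (iGain k ρ2 A D) S h1 X B hB hX,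
      fun xs hxs b => greedy_abstract (iGain k ρ2 A D) S iGain_nil h2
        (fun B X hB hX => part2_abstract (iGain k ρ2 A D) S h1 X B hB hX)
        xs (fun i => (hxs i).1) (fun i x hx => (hxs i).2 x hx) b⟩

end TransductiveAL
end
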